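/- arXiv:1201.1622 — 8 statements merged into one kernel-verified Lean document; each statement's English description precedes it below -/
import Mathlib

section
/- Let s ≥ 2, l ≥ 1, and let ζ be a substitution of constant length q on the alphabet 𝒜 = {a₁,…,a_s} such that: (1) for every j, the word ζ(a_j) begins with the two-letter word a₁a_j and ends with the letter a₁; and (2) ζ(a₁) contains as a subword every word of the form ωa_j where ω ranges over all words of length l over 𝒜 and a_j over 𝒜. Then for every m ≥ 1, p_ζ(lq^m + Σ_{i=0}^{m−1} q^i + 1) − p_ζ(lq^m + Σ_{i=0}^{m−1} q^i) ≥ s^l(s − 1). -/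
open Matrix

/-! ### Substitutions and their dynamical systems -/

/-- Apply a substitution to a finite word, by concatenation. -/
def wordApply {A : Type*} (σ : A → List A) (w : List A) : List A := w.flatMap σ

/-- The `n`-th iterate `σⁿ(a)` of the substitution applied to a letter `a`. -/
def substIter {A : Type*} (σ : A → List A) (n : ℕ) (a : A) : List A :=
  (wordApply σ)^[n] [a]

/-- A substitution is primitive if some (positive) iterate of every letter contains
every letter. -/
def IsPrimitive {A : Type*} (σ : A → List A) : Prop :=
  ∃ n : ℕ, 0 < n ∧ ∀ a b : A, b ∈ substIter σ n a

/-- A substitution is proper if for some `n ≥ 1` there are letters `a`, `b` such that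
`σⁿ(c)` starts with `a` and ends with `b` for every letter `c`. -/
def IsProper {A : Type*} (σ : A → List A) : Prop :=
  ∃ n : ℕ, 0 < n ∧ ∃ a b : A, ∀ c : A,
    (substIter σ n c).head? = some a ∧ (substIter σ n c).getLast? = some b

/-- The language of a substitution: all finite words occurring in some `σⁿ(a)`. -/
def Lang {A : Type*} (σ : A → List A) : Set (List A) :=
  { w | ∃ (n : ℕ) (a : A), w <:+: substIter σ n a }

/-- The complexity function of a substitution: the number of words of length `n`
in its language. -/
noncomputable def substComplexity {A : Type*} (σ : A → List A) (n : ℕ) : ℕ :=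
  Set.ncard { w | w ∈ Lang σ ∧ w.length = n }

/-- The finite word `x_i x_{i+1} ⋯ x_{i+n-1}` occurring in a two-sided sequence `x`. -/
def factor {A : Type*} (x : ℤ → A) (i : ℤ) (n : ℕ) : List A :=
  List.ofFn fun j : Fin n => x (i + (j : ℕ))

/-- The subshift `X_σ` of a substitution: all two-sided sequences all of whose finite
subwords belong to the language of `σ`. -/
def SubshiftSet {A : Type*} (σ : A → List A) : Set (ℤ → A) :=
  { x | ∀ (i : ℤ) (n : ℕ), factor x i n ∈ Lang σ }

/-- A substitution is aperiodic when its subshift is infinite. -/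
def IsAperiodic {A : Type*} (σ : A → List A) : Prop :=
  (SubshiftSet σ).Infinite

/-- The `n`-th power of the shift on two-sided sequences. -/
def zshift {A : Type*} (n : ℤ) (x : ℤ → A) : ℤ → A := fun m => x (m + n)

lemma factor_zshift {A : Type*} (x : ℤ → A) (n i : ℤ) (k : ℕ) :
    factor (zshift n x) i k = factor x (i + n) k := by
  unfold factor zshift
  congr 1
  funext j
  congr 1
  ring

lemma zshift_mem {A : Type*} {σ : A → List A} {x : ℤ → A}
    (hx : x ∈ SubshiftSet σ) (n : ℤ) : zshift n x ∈ SubshiftSet σ := by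
  intro i k
  rw [factor_zshift]
  exact hx _ _

/-- The shift homeomorphism `T_σ` restricted to the subshift `X_σ`. -/
def shiftMap {A : Type*} (σ : A → List A) (x : SubshiftSet σ) : SubshiftSet σ :=
  ⟨zshift 1 x.1, zshift_mem x.2 1⟩

/-- Conjugacy (topological isomorphism) of two substitution dynamical systems. -/
def Conjugate {A B : Type*} [TopologicalSpace A] [TopologicalSpace B]
    (σ : A → List A) (ζ : B → List B) : Prop :=
  ∃ h : SubshiftSet σ ≃ₜ SubshiftSet ζ, ∀ x, h (shiftMap σ x) = shiftMap ζ (h x)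

/-- Orbit equivalence of two substitution dynamical systems: a homeomorphism between
the subshifts mapping shift-orbits onto shift-orbits. -/
def OrbitEquivalent {A B : Type*} [TopologicalSpace A] [TopologicalSpace B]
    (σ : A → List A) (ζ : B → List B) : Prop :=
  ∃ h : SubshiftSet σ ≃ₜ SubshiftSet ζ,
    ∀ x y : SubshiftSet σ,
      (∃ n : ℤ, (y : ℤ → A) = zshift n x) ↔
      (∃ n : ℤ, ((h y : ℤ → B)) = zshift n (h x))

/-- Strong orbit equivalence: an orbit equivalence whose two orbit cocycles each have
at most one point of discontinuity. -/
def StrongOrbitEquivalent {A B : Type*} [TopologicalSpace A] [TopologicalSpace B]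
    (σ : A → List A) (ζ : B → List B) : Prop :=
  ∃ h : SubshiftSet σ ≃ₜ SubshiftSet ζ,
    (∀ x y : SubshiftSet σ,
      (∃ n : ℤ, (y : ℤ → A) = zshift n x) ↔
      (∃ n : ℤ, ((h y : ℤ → B)) = zshift n (h x))) ∧
    ∃ nc mc : SubshiftSet σ → ℤ,
      (∀ x, ((h (shiftMap σ x) : ℤ → B)) = zshift (nc x) (h x)) ∧
      (∀ x, zshift (mc x) (x : ℤ → A) = ((h.symm (shiftMap ζ (h x)) : ℤ → A))) ∧
      { x | ¬ ContinuousAt nc x }.Subsingleton ∧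
      { x | ¬ ContinuousAt mc x }.Subsingleton

/-- The incidence matrix of a substitution: entry `(i, j)` counts the occurrences of
the letter `i` in `σ(j)`. -/
def incidenceMatrix {A : Type*} [DecidableEq A] (σ : A → List A) : Matrix A A ℕ :=
  Matrix.of fun i j => (σ j).count i

/-! ### Primitive integer matrices and the clopen values set -/

/-- A square matrix with nonnegative integer entries is primitive if some positive power
has all entries strictly positive. -/
def MatPrimitive {I : Type*} [Fintype I] [DecidableEq I] (A : Matrix I I ℕ) : Prop :=
  ∃ n : ℕ, 0 < n ∧ ∀ i j, 0 < (A ^ n) i j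

/-- `PerronPair A lam x` : `lam` is an eigenvalue of `A` (viewed as a real matrix) with
strictly positive eigenvector `x`; for a primitive matrix this characterizes the
Perron–Frobenius eigenvalue. -/
def PerronPair {I : Type*} [Fintype I] (A : Matrix I I ℕ) (lam : ℝ) (x : I → ℝ) : Prop :=
  (∀ i, 0 < x i) ∧ (A.map (Nat.cast : ℕ → ℝ)) *ᵥ x = lam • x

/-- `H(x)`: the additive subgroup of `ℝ` generated by the entries of `x`. -/
def Hgroup {I : Type*} (x : I → ℝ) : Set ℝ :=
  (AddSubgroup.closure (Set.range x) : AddSubgroup ℝ)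

/-- `S(A) = ⋃_{N ≥ 0} λ^{-N} H(x)` where `λ` is the Perron–Frobenius eigenvalue of `A`
and `x` its normalized positive eigenvector. -/
def Sval {I : Type*} (lam : ℝ) (x : I → ℝ) : Set ℝ :=
  { z | ∃ (N : ℕ) (h : ℝ), h ∈ Hgroup x ∧ z = h / lam ^ N }

/-- A Perron number: a real algebraic integer `> 1` strictly larger in absolute value
than each of its other Galois conjugates (the other complex roots of its minimal
polynomial over `ℚ`). -/
def IsPerronNumber (lam : ℝ) : Prop :=
  IsIntegral ℤ lam ∧ 1 < lam ∧
  ∀ z : ℂ, (Polynomial.aeval z) (minpoly ℚ lam) = 0 → z ≠ (lam : ℂ) → ‖z‖ < lam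

/-- The words of length `n` occurring in a two-sided sequence `u`. -/
def zLang {A : Type*} (u : ℤ → A) (n : ℕ) : Set (List A) :=
  { w | ∃ i : ℤ, w = factor u i n }

/-- The complexity function of a two-sided sequence. -/
noncomputable def zComplexity {A : Type*} (u : ℤ → A) (n : ℕ) : ℕ :=
  (zLang u n).ncard


/-! ### Auxiliary lemmas for STATEMENT 1 -/

section AuxSubst

variable {A : Type*}

lemma wordApply_append (σ : A → List A) (u v : List A) :
    wordApply σ (u ++ v) = wordApply σ u ++ wordApply σ v :=
  List.flatMap_append

lemma wordApply_singleton (σ : A → List A) (a : A) : wordApply σ [a] = σ a := by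
  simp [wordApply]

lemma iterWA_append (σ : A → List A) (m : ℕ) (u v : List A) :
    (wordApply σ)^[m] (u ++ v) = (wordApply σ)^[m] u ++ (wordApply σ)^[m] v := by
  induction m generalizing u v with
  | zero => rfl
  | succ k ih => simp [Function.iterate_succ_apply, wordApply_append, ih]

lemma substIter_zero (σ : A → List A) (a : A) : substIter σ 0 a = [a] := rfl

lemma substIter_succ' (σ : A → List A) (m : ℕ) (a : A) :
    substIter σ (m + 1) a = (wordApply σ)^[m] (σ a) := by
  show (wordApply σ)^[m + 1] [a] = _
  rw [Function.iterate_succ_apply, wordApply_singleton]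

lemma substIter_succ_apply (σ : A → List A) (m : ℕ) (a : A) :
    substIter σ (m + 1) a = wordApply σ (substIter σ m a) :=
  Function.iterate_succ_apply' _ _ _

lemma iterWA_infix (σ : A → List A) (m : ℕ) {u v : List A} (h : u <:+: v) :
    (wordApply σ)^[m] u <:+: (wordApply σ)^[m] v := by
  obtain ⟨p, t, rfl⟩ := h
  exact ⟨(wordApply σ)^[m] p, (wordApply σ)^[m] t,
    by rw [← iterWA_append, ← iterWA_append]⟩

lemma wordApply_length {σ : A → List A} {q : ℕ} (hq : ∀ a, (σ a).length = q) :
    ∀ w : List A, (wordApply σ w).length = q * w.length := by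
  intro w
  induction w with
  | nil => simp [wordApply]
  | cons a t ih =>
    have h1 : wordApply σ (a :: t) = σ a ++ wordApply σ t := by
      rw [show a :: t = [a] ++ t from rfl, wordApply_append, wordApply_singleton]
    rw [h1, List.length_append, hq, ih, List.length_cons]
    ring

lemma iterWA_length {σ : A → List A} {q : ℕ} (hq : ∀ a, (σ a).length = q)
    (m : ℕ) (w : List A) : ((wordApply σ)^[m] w).length = q ^ m * w.length := by
  induction m generalizing w with
  | zero => simp
  | succ k ih =>
    rw [Function.iterate_succ_apply, ih, wordApply_length hq, pow_succ]
    ring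

lemma substIter_length {σ : A → List A} {q : ℕ} (hq : ∀ a, (σ a).length = q)
    (m : ℕ) (a : A) : (substIter σ m a).length = q ^ m := by
  show ((wordApply σ)^[m] [a]).length = q ^ m
  rw [iterWA_length hq]
  simp

/-- The common prefix `ζ^{m-1}(a₁) ⋯ ζ(a₁) a₁` of all the `ζ^m(j)`. -/
def Pword (σ : A → List A) (a1 : A) : ℕ → List A
  | 0 => []
  | k + 1 => substIter σ k a1 ++ Pword σ a1 k

lemma Pword_length {σ : A → List A} {q : ℕ} (hq : ∀ a, (σ a).length = q) (a1 : A)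
    (m : ℕ) : (Pword σ a1 m).length = ∑ i ∈ Finset.range m, q ^ i := by
  induction m with
  | zero => simp [Pword]
  | succ k ih =>
    rw [Pword, List.length_append, substIter_length hq, ih, Finset.sum_range_succ]
    ring

lemma Pword_succ (σ : A → List A) (a1 : A) (k : ℕ) :
    Pword σ a1 (k + 1) = wordApply σ (Pword σ a1 k) ++ [a1] := by
  induction k with
  | zero => simp [Pword, wordApply, substIter_zero]
  | succ k ih =>
    calc Pword σ a1 (k + 1 + 1)
        = substIter σ (k + 1) a1 ++ Pword σ a1 (k + 1) := rfl
      _ = wordApply σ (substIter σ k a1) ++ (wordApply σ (Pword σ a1 k) ++ [a1]) := by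
          rw [← substIter_succ_apply, ih]
      _ = wordApply σ (substIter σ k a1 ++ Pword σ a1 k) ++ [a1] := by
          rw [wordApply_append, List.append_assoc]
      _ = wordApply σ (Pword σ a1 (k + 1)) ++ [a1] := rfl

lemma Pword_prefix {σ : A → List A} {a1 : A} (hpre : ∀ j : A, [a1, j] <+: σ j)
    (m : ℕ) (j : A) : Pword σ a1 m ++ [j] <+: substIter σ m j := by
  induction m with
  | zero => simp [Pword, substIter_zero]
  | succ k ih =>
    rw [substIter_succ_apply]
    have h1 : wordApply σ (Pword σ a1 k ++ [j]) <+: wordApply σ (substIter σ k j) := by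
      obtain ⟨t, ht⟩ := ih
      exact ⟨wordApply σ t, by rw [← wordApply_append, ht]⟩
    rw [wordApply_append, wordApply_singleton] at h1
    obtain ⟨r, hr⟩ := hpre j
    obtain ⟨t, ht⟩ := h1
    rw [Pword_succ]
    refine ⟨r ++ t, ?_⟩
    rw [← ht, ← hr]
    simp

lemma substIter_letter_inj {σ : A → List A} {a1 : A}
    (hpre : ∀ j : A, [a1, j] <+: σ j) (m : ℕ) {a b : A}
    (h : substIter σ m a = substIter σ m b) : a = b := by
  have h1 := Pword_prefix hpre m a
  have h2 := Pword_prefix hpre m b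
  rw [h] at h1
  have h3 := List.prefix_of_prefix_length_le h1 h2 (by simp)
  have h4 := h3.eq_of_length (by simp)
  have h5 := List.append_cancel_left h4
  simpa using h5

lemma iterWA_word_inj {σ : A → List A} {a1 : A} {q : ℕ}
    (hq : ∀ a, (σ a).length = q) (hpre : ∀ j : A, [a1, j] <+: σ j) (m : ℕ) :
    ∀ (w w' : List A), w.length = w'.length →
      (wordApply σ)^[m] w = (wordApply σ)^[m] w' → w = w' := by
  intro w
  induction w with
  | nil =>
    intro w' hlen _
    exact (List.length_eq_zero_iff.mp hlen.symm).symm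
  | cons a t ih =>
    intro w' hlen heq
    cases w' with
    | nil => simp at hlen
    | cons b t' =>
      have e1 : (wordApply σ)^[m] (a :: t) =
          substIter σ m a ++ (wordApply σ)^[m] t := by
        rw [show a :: t = [a] ++ t from rfl, iterWA_append]; rfl
      have e2 : (wordApply σ)^[m] (b :: t') =
          substIter σ m b ++ (wordApply σ)^[m] t' := by
        rw [show b :: t' = [b] ++ t' from rfl, iterWA_append]; rfl
      rw [e1, e2] at heq
      have hlen' : (substIter σ m a).length = (substIter σ m b).length := by
        rw [substIter_length hq, substIter_length hq]
      obtain ⟨hab, htt⟩ := List.append_inj heq hlen'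
      have hab' := substIter_letter_inj hpre m hab
      simp only [List.length_cons, Nat.add_right_cancel_iff] at hlen
      rw [hab', ih t' hlen htt]

lemma lang_infix_closed {σ : A → List A} {w w' : List A} (h : w' <:+: w)
    (hw : w ∈ Lang σ) : w' ∈ Lang σ := by
  obtain ⟨N, a, hwa⟩ := hw
  exact ⟨N, a, h.trans hwa⟩

lemma extend_in_double {v S : List A} (h : v <:+: S) (hS : S ≠ []) :
    ∃ c, v ++ [c] <:+: S ++ S := by
  obtain ⟨p, t, hpt⟩ := h
  cases t with
  | cons c t' =>
    refine ⟨c, ?_⟩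
    have h1 : v ++ [c] <:+: S := ⟨p, t', by rw [← hpt]; simp⟩
    exact h1.trans (List.prefix_append S S).isInfix
  | nil =>
    obtain ⟨c, S₂, hcS⟩ := List.exists_cons_of_ne_nil hS
    refine ⟨c, p, S₂, ?_⟩
    have hpv : p ++ v = S := by simpa using hpt
    calc p ++ (v ++ [c]) ++ S₂ = (p ++ v) ++ (c :: S₂) := by simp
      _ = S ++ S := by rw [hpv, ← hcS]

end AuxSubst

/-- complexity growth for a constant-length substitution whose images start
with `a₁a_j`, end with `a₁`, and whose image of `a₁` contains all words `ω a_j` with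
`|ω| = l`. -/
theorem complexity_jump_constant_length
    {A : Type*} [Fintype A] (s q l : ℕ) (hcard : Fintype.card A = s)
    (hs : 2 ≤ s) (hl : 1 ≤ l) (a1 : A) (ζ : A → List A)
    (hq : ∀ a, (ζ a).length = q)
    (hpre : ∀ j : A, [a1, j] <+: ζ j)
    (hsuf : ∀ j : A, [a1] <:+ ζ j)
    (hcontain : ∀ w : List A, w.length = l → ∀ j : A, (w ++ [j]) <:+: ζ a1) :
    ∀ m : ℕ, 1 ≤ m →
      substComplexity ζ (l * q ^ m + ∑ i ∈ Finset.range m, q ^ i) + s ^ l * (s - 1) ≤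
      substComplexity ζ (l * q ^ m + ∑ i ∈ Finset.range m, q ^ i + 1) := by
  classical
  intro m _
  have hq2 : 2 ≤ q := by
    have h := (hpre a1).length_le
    rwa [hq a1] at h
  set n := l * q ^ m + ∑ i ∈ Finset.range m, q ^ i with hn
  -- every word of the language extends on the right within the language
  have hext : ∀ v ∈ Lang ζ, ∃ c, v ++ [c] ∈ Lang ζ := by
    intro v hv
    obtain ⟨N, a, hva⟩ := hv
    have ha : [a] <:+: ζ a1 := by
      have h1 := hcontain (List.replicate l a1) (by simp) a
      exact (List.suffix_append (List.replicate l a1) [a]).isInfix.trans h1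
    have hstep : substIter ζ N a <:+: substIter ζ (N + 1) a1 := by
      rw [substIter_succ']
      exact iterWA_infix ζ N ha
    have hvS : v <:+: substIter ζ (N + 1) a1 := hva.trans hstep
    have hSne : substIter ζ (N + 1) a1 ≠ [] := by
      have hl1 : (substIter ζ (N + 1) a1).length = q ^ (N + 1) :=
        substIter_length hq _ _
      have hpos : 0 < (substIter ζ (N + 1) a1).length := by
        rw [hl1]; exact pow_pos (by omega) _
      exact List.ne_nil_of_length_pos hpos
    obtain ⟨c, hc⟩ := extend_in_double hvS hSne
    have hSS : substIter ζ (N + 1) a1 ++ substIter ζ (N + 1) a1 <+: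
        substIter ζ (N + 2) a1 := by
      obtain ⟨r, hr⟩ := hpre a1
      have he : substIter ζ (N + 2) a1 = (wordApply ζ)^[N + 1] (ζ a1) :=
        substIter_succ' ζ (N + 1) a1
      rw [he, ← hr, show [a1, a1] ++ r = [a1] ++ ([a1] ++ r) from rfl,
        iterWA_append, iterWA_append]
      exact ⟨(wordApply ζ)^[N + 1] r, by simp [substIter]⟩
    exact ⟨c, N + 2, a1, hc.trans hSS.isInfix⟩
  -- finiteness of the sets of words of a given length in the language
  have hfin1 : {w | w ∈ Lang ζ ∧ w.length = n}.Finite :=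
    (List.finite_length_eq A n).subset fun w hw => hw.2
  have hfin2 : {w | w ∈ Lang ζ ∧ w.length = n + 1}.Finite :=
    (List.finite_length_eq A (n + 1)).subset fun w hw => hw.2
  simp only [substComplexity]
  rw [Set.ncard_eq_toFinset_card _ hfin1, Set.ncard_eq_toFinset_card _ hfin2]
  set F := hfin1.toFinset with hF
  set T := hfin2.toFinset with hT
  have hmemF : ∀ w, w ∈ F ↔ w ∈ Lang ζ ∧ w.length = n := by
    intro w; rw [hF, Set.Finite.mem_toFinset]; rfl
  have hmemT : ∀ w, w ∈ T ↔ w ∈ Lang ζ ∧ w.length = n + 1 := by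
    intro w; rw [hT, Set.Finite.mem_toFinset]; rfl
  -- fiberwise counting along dropLast
  have hmaps : ∀ u ∈ T, u.dropLast ∈ F := by
    intro u hu
    rw [hmemT] at hu
    rw [hmemF]
    refine ⟨lang_infix_closed (List.dropLast_prefix u).isInfix hu.1, ?_⟩
    rw [List.length_dropLast, hu.2]
    omega
  have hsum : T.card = ∑ v ∈ F, (T.filter fun u => u.dropLast = v).card :=
    Finset.card_eq_sum_card_fiberwise hmaps
  -- the right-special words
  set Spec : Finset (List A) := Finset.univ.image
    (fun f : Fin l → A => (wordApply ζ)^[m] (List.ofFn f) ++ Pword ζ a1 m)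
    with hSpec
  have hspecial : ∀ (w : List A), w.length = l → ∀ j : A,
      ((wordApply ζ)^[m] w ++ Pword ζ a1 m) ++ [j] ∈ Lang ζ := by
    intro w hw j
    have h1 : w ++ [j] <:+: ζ a1 := hcontain w hw j
    have h2 : (wordApply ζ)^[m] (w ++ [j]) <:+: substIter ζ (m + 1) a1 := by
      rw [substIter_succ']
      exact iterWA_infix ζ m h1
    have h3 : (wordApply ζ)^[m] (w ++ [j]) =
        (wordApply ζ)^[m] w ++ substIter ζ m j := by
      rw [iterWA_append]; rfl
    have h4 : ((wordApply ζ)^[m] w ++ Pword ζ a1 m) ++ [j] <+: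
        (wordApply ζ)^[m] w ++ substIter ζ m j := by
      obtain ⟨t, ht⟩ := Pword_prefix hpre m j
      exact ⟨t, by rw [← ht]; simp⟩
    rw [← h3] at h4
    exact ⟨m + 1, a1, h4.isInfix.trans h2⟩
  have hlenspec : ∀ w : List A, w.length = l →
      ((wordApply ζ)^[m] w ++ Pword ζ a1 m).length = n := by
    intro w hw
    rw [List.length_append, iterWA_length hq, Pword_length hq, hw, hn, mul_comm]
  have hSpecSub : Spec ⊆ F := by
    intro v hv
    rw [hSpec, Finset.mem_image] at hv
    obtain ⟨f, -, rfl⟩ := hv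
    rw [hmemF]
    exact ⟨lang_infix_closed (List.prefix_append _ _).isInfix
        (hspecial (List.ofFn f) (by simp) a1),
      hlenspec (List.ofFn f) (by simp)⟩
  have hinj : Function.Injective
      (fun f : Fin l → A => (wordApply ζ)^[m] (List.ofFn f) ++ Pword ζ a1 m) := by
    intro f g hfg
    simp only at hfg
    have hlen : ((wordApply ζ)^[m] (List.ofFn f)).length =
        ((wordApply ζ)^[m] (List.ofFn g)).length := by
      rw [iterWA_length hq, iterWA_length hq]; simp
    have h6 := (List.append_inj hfg hlen).1
    have h7 := iterWA_word_inj hq hpre m _ _ (by simp) h6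
    exact List.ofFn_injective h7
  have hSpecCard : Spec.card = s ^ l := by
    have h8 : Spec.card = (Finset.univ : Finset (Fin l → A)).card :=
      Finset.card_image_of_injective _ hinj
    rw [h8, Finset.card_univ, Fintype.card_fun, hcard, Fintype.card_fin]
  -- fibers over special words have at least `s` elements
  have hfibS : ∀ v ∈ Spec, s ≤ (T.filter fun u => u.dropLast = v).card := by
    intro v hv
    rw [hSpec, Finset.mem_image] at hv
    obtain ⟨f, -, rfl⟩ := hv
    show s ≤ (T.filter fun u =>
      u.dropLast = (wordApply ζ)^[m] (List.ofFn f) ++ Pword ζ a1 m).card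
    have hinj2 : Function.Injective
        (fun j : A => ((wordApply ζ)^[m] (List.ofFn f) ++ Pword ζ a1 m) ++ [j]) := by
      intro a b hab
      simpa using List.append_cancel_left hab
    have hsub : Finset.univ.image
        (fun j : A => ((wordApply ζ)^[m] (List.ofFn f) ++ Pword ζ a1 m) ++ [j]) ⊆
        T.filter fun u =>
          u.dropLast = (wordApply ζ)^[m] (List.ofFn f) ++ Pword ζ a1 m := by
      intro u hu
      rw [Finset.mem_image] at hu
      obtain ⟨j, -, rfl⟩ := hu
      rw [Finset.mem_filter, hmemT]
      refine ⟨⟨hspecial (List.ofFn f) (by simp) j, ?_⟩, List.dropLast_concat⟩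
      rw [List.length_append, hlenspec (List.ofFn f) (by simp)]
      rfl
    calc s = Fintype.card A := hcard.symm
      _ = (Finset.univ.image (fun j : A =>
            ((wordApply ζ)^[m] (List.ofFn f) ++ Pword ζ a1 m) ++ [j])).card := by
          rw [Finset.card_image_of_injective _ hinj2, Finset.card_univ]
      _ ≤ _ := Finset.card_le_card hsub
  -- every fiber is nonempty
  have hfib1 : ∀ v ∈ F, 1 ≤ (T.filter fun u => u.dropLast = v).card := by
    intro v hv
    rw [hmemF] at hv
    obtain ⟨c, hc⟩ := hext v hv.1
    rw [Nat.one_le_iff_ne_zero, ← Nat.pos_iff_ne_zero, Finset.card_pos]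
    refine ⟨v ++ [c], ?_⟩
    rw [Finset.mem_filter, hmemT]
    refine ⟨⟨hc, ?_⟩, List.dropLast_concat⟩
    rw [List.length_append, hv.2]
    rfl
  -- assemble the count
  have hsplit : ∑ v ∈ F \ Spec, (T.filter fun u => u.dropLast = v).card +
      ∑ v ∈ Spec, (T.filter fun u => u.dropLast = v).card =
      ∑ v ∈ F, (T.filter fun u => u.dropLast = v).card :=
    Finset.sum_sdiff hSpecSub
  have hb1 : (F \ Spec).card ≤
      ∑ v ∈ F \ Spec, (T.filter fun u => u.dropLast = v).card := by
    have h9 := Finset.card_nsmul_le_sum (F \ Spec)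
      (fun v => (T.filter fun u => u.dropLast = v).card) 1
      (fun v hv => hfib1 v (Finset.mem_sdiff.mp hv).1)
    simpa using h9
  have hb2 : Spec.card * s ≤
      ∑ v ∈ Spec, (T.filter fun u => u.dropLast = v).card := by
    have h10 := Finset.card_nsmul_le_sum Spec
      (fun v => (T.filter fun u => u.dropLast = v).card) s hfibS
    simpa [smul_eq_mul] using h10
  have hcards : (F \ Spec).card = F.card - Spec.card := Finset.card_sdiff_of_subset hSpecSub
  have hle : Spec.card ≤ F.card := Finset.card_le_card hSpecSub
  have hmul : Spec.card * s = Spec.card * (s - 1) + Spec.card := by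
    have h11 : s - 1 + 1 = s := by omega
    calc Spec.card * s = Spec.card * (s - 1 + 1) := by rw [h11]
      _ = Spec.card * (s - 1) + Spec.card := by ring
  have hkey : (F \ Spec).card + Spec.card * s = F.card + Spec.card * (s - 1) := by
    rw [hcards, hmul]
    generalize Spec.card * (s - 1) = k
    omega
  rw [hsum, ← hsplit, ← hSpecCard, ← hkey]
  exact Nat.add_le_add hb1 hb2
end

section
/- Let A be a primitive s×s matrix with nonnegative integer entries whose Perron–Frobenius eigenvalue λ satisfies λ > 1. Then for every n ≥ 1 there exists a primitive (s+n)×(s+n) matrix A_n with nonnegative integer entries such that S(A_n) = S(A). -/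
open Matrix

/-! ### Auxiliary lemmas for Statement 2 -/

lemma aux_mul_closure {I : Type*} (c : ℝ) (H : AddSubgroup ℝ) (v : I → ℝ)
    (hv : ∀ i, c * v i ∈ H) : ∀ h ∈ AddSubgroup.closure (Set.range v), c * h ∈ H := by
  intro h hh
  have hle : AddSubgroup.closure (Set.range v) ≤ H.comap (AddMonoidHom.mulLeft c) := by
    rw [AddSubgroup.closure_le]
    rintro _ ⟨i, rfl⟩
    simpa using hv i
  simpa using hle hh

lemma aux_pow_mulVec {s : ℕ} (A : Matrix (Fin s) (Fin s) ℕ) (lam : ℝ) (x : Fin s → ℝ)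
    (h : A.map (Nat.cast : ℕ → ℝ) *ᵥ x = lam • x) (k : ℕ) :
    (A ^ k).map (Nat.cast : ℕ → ℝ) *ᵥ x = (lam ^ k) • x := by
  induction k with
  | zero =>
      simp [Matrix.map_one (Nat.cast : ℕ → ℝ) Nat.cast_zero Nat.cast_one]
  | succ k ih =>
      have hmm : (A ^ (k + 1)).map (Nat.cast : ℕ → ℝ)
          = A.map (Nat.cast : ℕ → ℝ) * (A ^ k).map (Nat.cast : ℕ → ℝ) := by
        rw [pow_succ']
        exact Matrix.map_mul (f := Nat.castRingHom ℝ)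
      rw [hmm, ← Matrix.mulVec_mulVec, ih, Matrix.mulVec_smul, h, smul_smul, ← pow_succ]

lemma aux_entries_ge {s : ℕ} (A : Matrix (Fin s) (Fin s) ℕ)
    (h2 : ∃ m, 0 < m ∧ ∀ i j, 2 ≤ (A ^ m) i j) (N : ℕ) :
    ∃ m, 0 < m ∧ ∀ i j, N ≤ (A ^ m) i j := by
  obtain ⟨m, hm, hA⟩ := h2
  have key : ∀ k, ∀ i j : Fin s, 2 ^ (k + 1) ≤ ((A ^ m) ^ (k + 1)) i j := by
    intro k
    induction k with
    | zero => intro i j; simpa using hA i j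
    | succ k ih =>
        intro i j
        have hexp : ((A ^ m) ^ (k + 1 + 1)) i j
            = ∑ l, (A ^ m) i l * ((A ^ m) ^ (k + 1)) l j := by
          rw [pow_succ']
          exact Matrix.mul_apply
        rw [hexp]
        calc (2 : ℕ) ^ (k + 1 + 1) = 2 * 2 ^ (k + 1) := by ring
          _ ≤ (A ^ m) i i * ((A ^ m) ^ (k + 1)) i j := Nat.mul_le_mul (hA i i) (ih i j)
          _ ≤ ∑ l, (A ^ m) i l * ((A ^ m) ^ (k + 1)) l j :=
              Finset.single_le_sum (f := fun l => (A ^ m) i l * ((A ^ m) ^ (k + 1)) l j)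
                (fun l _ => Nat.zero_le _) (Finset.mem_univ i)
  refine ⟨m * (N + 1), Nat.mul_pos hm (Nat.succ_pos N), fun i j => ?_⟩
  rw [pow_mul]
  calc N ≤ 2 ^ N := (Nat.lt_two_pow_self (n := N)).le
    _ ≤ 2 ^ (N + 1) := Nat.pow_le_pow_right (by norm_num) (Nat.le_succ N)
    _ ≤ ((A ^ m) ^ (N + 1)) i j := key N i j

/-- for a primitive matrix `A` with Perron eigenvalue `λ > 1`, there are
primitive matrices of every larger size with the same clopen values set `S(A)`. -/
theorem exists_primitive_matrix_same_Sval_larger_size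
    {s : ℕ} (A : Matrix (Fin s) (Fin s) ℕ) (lam : ℝ) (x : Fin s → ℝ)
    (hprim : MatPrimitive A) (hpf : PerronPair A lam x)
    (hsum : ∑ i, x i = 1) (hlam : 1 < lam) :
    ∀ n : ℕ, 1 ≤ n → ∃ B : Matrix (Fin (s + n)) (Fin (s + n)) ℕ,
      MatPrimitive B ∧ ∃ (mu : ℝ) (y : Fin (s + n) → ℝ),
        PerronPair B mu y ∧ ∑ i, y i = 1 ∧ Sval mu y = Sval lam x := by
  intro n hn
  rcases s with _ | p
  · simp at hsum
  obtain ⟨hxpos, hAx⟩ := hpf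
  have hlam0 : (0 : ℝ) < lam := lt_trans one_pos hlam
  have hAx' : ∀ i, (∑ j, (A i j : ℝ) * x j) = lam * x i := by
    intro i
    have h := congrFun hAx i
    simpa [Matrix.mulVec, dotProduct, Matrix.map_apply] using h
  -- Step 1: some power of `A` has all entries at least 2
  have h2 : ∃ m, 0 < m ∧ ∀ i j, 2 ≤ (A ^ m) i j := by
    obtain ⟨n₀, hn₀, hpos⟩ := hprim
    rcases Nat.eq_zero_or_pos p with hp | hp
    · subst hp
      refine ⟨1, one_pos, fun i j => ?_⟩
      rw [pow_one]
      have hall : ∀ k : Fin (0 + 1), k = i := by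
        intro k
        have h1 := k.isLt
        have h2 := i.isLt
        exact Fin.ext (by omega)
      have hs := hAx' i
      rw [Fin.sum_univ_succ] at hs
      simp only [Finset.univ_eq_empty, Finset.sum_empty, add_zero] at hs
      rw [hall 0] at hs
      have hAi : (A i i : ℝ) = lam := mul_right_cancel₀ (ne_of_gt (hxpos i)) hs
      have h1lt : (1 : ℝ) < (A i i : ℝ) := by rw [hAi]; exact hlam
      have h1lt' : 1 < A i i := by exact_mod_cast h1lt
      rw [hall j]
      omega
    · refine ⟨2 * n₀, by omega, fun i j => ?_⟩
      have hexp : (A ^ (2 * n₀)) i j = ∑ l, (A ^ n₀) i l * (A ^ n₀) l j := by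
        rw [two_mul, pow_add]
        exact Matrix.mul_apply
      rw [hexp]
      calc (2 : ℕ) ≤ p + 1 := by omega
        _ = ∑ _l : Fin (p + 1), 1 := by simp
        _ ≤ ∑ l, (A ^ n₀) i l * (A ^ n₀) l j :=
            Finset.sum_le_sum fun l _ => by
              simpa using Nat.mul_le_mul (hpos i l) (hpos l j)
  -- Step 2: power with all entries ≥ n + 1
  obtain ⟨m, hm, hCge⟩ := aux_entries_ge A h2 (n + 1)
  set C : Matrix (Fin (p + 1)) (Fin (p + 1)) ℕ := A ^ m with hCdef
  set μ : ℝ := lam ^ m with hμdef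
  have hμpos : 0 < μ := pow_pos hlam0 m
  have hμne : μ ≠ 0 := ne_of_gt hμpos
  have hCx : ∀ i, (∑ j, (C i j : ℝ) * x j) = μ * x i := by
    intro i
    have h := congrFun (aux_pow_mulVec A lam x hAx m) i
    simpa [Matrix.mulVec, dotProduct, Matrix.map_apply] using h
  classical
  -- Step 3: the split construction on `Fin p ⊕ Fin (n+1)`
  set R : (Fin p ⊕ Fin (n + 1)) → Fin (p + 1) → ℕ :=
    Sum.elim (fun i j => C i.castSucc j)
      (fun t j => if t = Fin.last n then C (Fin.last p) j - n else 1) with hRdef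
  set π : (Fin p ⊕ Fin (n + 1)) → Fin (p + 1) :=
    Sum.elim Fin.castSucc (fun _ => Fin.last p) with hπdef
  have hR1 : ∀ i j, 1 ≤ R i j := by
    rintro (i | t) j
    · have := hCge i.castSucc j
      simp only [hRdef, Sum.elim_inl]
      omega
    · simp only [hRdef, Sum.elim_inr]
      split
      · have := hCge (Fin.last p) j
        omega
      · exact le_refl 1
  have hRsum : ∀ j, (∑ t : Fin (n + 1), R (Sum.inr t) j) = C (Fin.last p) j := by
    intro j
    rw [← Finset.sum_erase_add Finset.univ _ (Finset.mem_univ (Fin.last n))]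
    have h1 : (∑ t ∈ Finset.univ.erase (Fin.last n), R (Sum.inr t) j) = n := by
      have hc : ∀ t ∈ Finset.univ.erase (Fin.last n), R (Sum.inr t) j = 1 := by
        intro t ht
        simp only [hRdef, Sum.elim_inr, if_neg (Finset.ne_of_mem_erase ht)]
      rw [Finset.sum_congr rfl hc, Finset.sum_const,
        Finset.card_erase_of_mem (Finset.mem_univ _), Finset.card_univ, Fintype.card_fin]
      simp
    have h2 : R (Sum.inr (Fin.last n)) j = C (Fin.last p) j - n := by
      simp [hRdef]
    rw [h1, h2]
    have := hCge (Fin.last p) j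
    omega
  set y₀ : (Fin p ⊕ Fin (n + 1)) → ℝ :=
    Sum.elim (fun i => x i.castSucc)
      (fun t => (∑ j, (R (Sum.inr t) j : ℝ) * x j) / μ) with hy₀def
  have hy₀pos : ∀ i, 0 < y₀ i := by
    rintro (i | t)
    · exact hxpos i.castSucc
    · refine div_pos (Finset.sum_pos (fun j _ => mul_pos ?_ (hxpos j)) Finset.univ_nonempty) hμpos
      exact_mod_cast Nat.lt_of_lt_of_le Nat.one_pos (hR1 (Sum.inr t) j)
  have K2 : (∑ t : Fin (n + 1), y₀ (Sum.inr t)) = x (Fin.last p) := by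
    have e1 : (∑ t : Fin (n + 1), y₀ (Sum.inr t))
        = (∑ t : Fin (n + 1), ∑ j, (R (Sum.inr t) j : ℝ) * x j) / μ := by
      rw [Finset.sum_div]
      exact Finset.sum_congr rfl fun t _ => rfl
    rw [e1, Finset.sum_comm]
    have e2 : (∑ j, ∑ t : Fin (n + 1), (R (Sum.inr t) j : ℝ) * x j) = μ * x (Fin.last p) := by
      rw [← hCx (Fin.last p)]
      refine Finset.sum_congr rfl fun j _ => ?_
      rw [← Finset.sum_mul, ← Nat.cast_sum, hRsum j]
    rw [e2, mul_div_cancel_left₀ _ hμne]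
  have K3 : ∀ g : Fin (p + 1) → ℝ,
      (∑ i : Fin p ⊕ Fin (n + 1), g (π i) * y₀ i) = ∑ j, g j * x j := by
    intro g
    rw [Fintype.sum_sum_type, Fin.sum_univ_castSucc (f := fun j => g j * x j)]
    have hc : ∀ t : Fin (n + 1),
        g (π (Sum.inr t)) * y₀ (Sum.inr t) = g (Fin.last p) * y₀ (Sum.inr t) := fun t => rfl
    have h1 : (∑ t : Fin (n + 1), g (π (Sum.inr t)) * y₀ (Sum.inr t))
        = g (Fin.last p) * x (Fin.last p) := by
      rw [Finset.sum_congr rfl fun t _ => hc t, ← Finset.mul_sum, K2]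
    rw [h1]
    rfl
  set B₀ : Matrix (Fin p ⊕ Fin (n + 1)) (Fin p ⊕ Fin (n + 1)) ℕ :=
    Matrix.of (fun i j => R i (π j)) with hB₀def
  have hB₀pos : ∀ a b, 0 < B₀ a b := by
    intro a b
    simp only [hB₀def, Matrix.of_apply]
    exact Nat.lt_of_lt_of_le Nat.one_pos (hR1 _ _)
  have hB₀y : ∀ i, (∑ j, (B₀ i j : ℝ) * y₀ j) = μ * y₀ i := by
    intro i
    have e1 : (∑ j, (B₀ i j : ℝ) * y₀ j) = ∑ j, (R i j : ℝ) * x j := K3 fun j => (R i j : ℝ)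
    rw [e1]
    match i with
    | Sum.inl i =>
        have e2 : (∑ j, (R (Sum.inl i) j : ℝ) * x j) = ∑ j, (C i.castSucc j : ℝ) * x j := rfl
        rw [e2, hCx]
        rfl
    | Sum.inr t =>
        have e2 : y₀ (Sum.inr t) = (∑ j, (R (Sum.inr t) j : ℝ) * x j) / μ := rfl
        rw [e2]
        field_simp
  have hy₀sum : (∑ i, y₀ i) = 1 := by
    have h := K3 fun _ => (1 : ℝ)
    simp only [one_mul] at h
    rw [h, hsum]
  -- Step 4: the clopen values set is preserved
  set Hx : AddSubgroup ℝ := AddSubgroup.closure (Set.range x) with hHxdef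
  set Hy : AddSubgroup ℝ := AddSubgroup.closure (Set.range y₀) with hHydef
  have hcomb : ∀ w : Fin (p + 1) → ℕ, (∑ j, (w j : ℝ) * x j) ∈ Hx := by
    intro w
    refine AddSubgroup.sum_mem _ fun j _ => ?_
    rw [← nsmul_eq_mul]
    exact AddSubgroup.nsmul_mem _ (AddSubgroup.subset_closure (Set.mem_range_self j)) _
  have hlamH : ∀ h ∈ Hx, lam * h ∈ Hx := by
    refine aux_mul_closure lam Hx x fun i => ?_
    rw [← hAx' i]
    exact hcomb (A i)
  have hlampow : ∀ k : ℕ, ∀ h ∈ Hx, lam ^ k * h ∈ Hx := by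
    intro k
    induction k with
    | zero => intro h hh; simpa using hh
    | succ k ih =>
        intro h hh
        have h2 := hlamH _ (ih h hh)
        have e : lam ^ (k + 1) * h = lam * (lam ^ k * h) := by ring
        rw [e]; exact h2
  have hμy : ∀ i, μ * y₀ i ∈ Hx := by
    rintro (i | t)
    · have e : y₀ (Sum.inl i) = x i.castSucc := rfl
      rw [e, hμdef]
      exact hlampow m _ (AddSubgroup.subset_closure (Set.mem_range_self i.castSucc))
    · have e : y₀ (Sum.inr t) = (∑ j, (R (Sum.inr t) j : ℝ) * x j) / μ := rfl
      have e2 : μ * ((∑ j, (R (Sum.inr t) j : ℝ) * x j) / μ)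
          = ∑ j, (R (Sum.inr t) j : ℝ) * x j := by
        field_simp
      rw [e, e2]
      exact hcomb _
  have hμHy : ∀ h ∈ Hy, μ * h ∈ Hx := aux_mul_closure μ Hx y₀ hμy
  have hHxy : ∀ h ∈ Hx, h ∈ Hy := by
    intro h hh
    have hle : Hx ≤ Hy := by
      rw [hHxdef, AddSubgroup.closure_le]
      rintro _ ⟨j, rfl⟩
      refine Fin.lastCases ?_ ?_ j
      · have : (∑ t : Fin (n + 1), y₀ (Sum.inr t)) ∈ Hy :=
          AddSubgroup.sum_mem _ fun t _ => AddSubgroup.subset_closure (Set.mem_range_self (Sum.inr t))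
        rw [K2] at this
        exact this
      · intro i
        exact AddSubgroup.subset_closure (Set.mem_range_self (Sum.inl i))
    exact hle hh
  have hSval : Sval μ y₀ = Sval lam x := by
    ext z
    constructor
    · rintro ⟨N, h, hh, rfl⟩
      refine ⟨m * (N + 1), μ * h, ?_, ?_⟩
      · exact hμHy h hh
      · rw [pow_mul, ← hμdef, pow_succ]
        rw [eq_div_iff (by positivity)]
        field_simp
    · rintro ⟨N, h, hh, rfl⟩
      refine ⟨N, lam ^ (m * N - N) * h, ?_, ?_⟩
      · exact hHxy _ (hlampow _ _ hh)
      · have hNle : N ≤ m * N := Nat.le_mul_of_pos_left N hm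
        have hexp : lam ^ (m * N) = lam ^ (m * N - N) * lam ^ N := by
          rw [← pow_add]
          congr 1
          omega
        rw [hμdef, ← pow_mul, hexp]
        have hc : lam ^ (m * N - N) ≠ 0 := pow_ne_zero _ (ne_of_gt hlam0)
        rw [mul_div_mul_left h (lam ^ N) hc]
  -- Step 5: transport to `Fin (p + 1 + n)`
  set e : (Fin p ⊕ Fin (n + 1)) ≃ Fin (p + 1 + n) :=
    finSumFinEquiv.trans (finCongr (by omega)) with hedef
  refine ⟨Matrix.of (fun i j => B₀ (e.symm i) (e.symm j)), ?_, μ, y₀ ∘ e.symm, ⟨?_, ?_⟩, ?_, ?_⟩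
  · refine ⟨1, one_pos, fun i j => ?_⟩
    rw [pow_one]
    simpa using hB₀pos (e.symm i) (e.symm j)
  · intro i
    exact hy₀pos (e.symm i)
  · funext i
    have e1 : ((Matrix.of (fun i j => B₀ (e.symm i) (e.symm j))).map (Nat.cast : ℕ → ℝ)
          *ᵥ (y₀ ∘ e.symm)) i
        = ∑ j, (B₀ (e.symm i) (e.symm j) : ℝ) * y₀ (e.symm j) := by
      simp [Matrix.mulVec, dotProduct, Matrix.map_apply, Function.comp]
    rw [e1, Equiv.sum_comp e.symm (fun j' => (B₀ (e.symm i) j' : ℝ) * y₀ j'), hB₀y]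
    simp [Function.comp]
  · have h2 : (∑ i, (y₀ ∘ e.symm) i) = ∑ i, y₀ i := Equiv.sum_comp e.symm y₀
    rw [h2, hy₀sum]
  · have hrange : Set.range (y₀ ∘ e.symm) = Set.range y₀ := e.symm.surjective.range_comp y₀
    have hSval2 : Sval μ (y₀ ∘ e.symm) = Sval μ y₀ := by
      unfold Sval Hgroup
      rw [hrange]
    rw [hSval2, hSval]
end

section
/- Let A be a primitive s×s matrix with nonnegative integer entries, with Perron–Frobenius eigenvalue λ > 1 and normalized positive eigenvector x = (x₁,…,x_s)ᵀ, Σᵢ xᵢ = 1. Then there exist k ∈ ℕ and a primitive (s+1)×(s+1) matrix A₁ with nonnegative integer entries such that A₁y = λᵏy, where y = (x₁,…,x_s, λ−1)ᵀ. Moreover, the additive subgroup of ℝ generated by the entries of y equals H(x), and S(A₁) = S(A). -/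
open Matrix

private lemma eig_pow' {s : ℕ} (M : Matrix (Fin s) (Fin s) ℝ) (lam : ℝ) (x : Fin s → ℝ)
    (h : M *ᵥ x = lam • x) (m : ℕ) : M ^ m *ᵥ x = lam ^ m • x := by
  induction m with
  | zero => simp
  | succ n ih =>
    rw [pow_succ', ← Matrix.mulVec_mulVec, ih, Matrix.mulVec_smul, h, smul_smul, ← pow_succ]

private lemma eig_pow {s : ℕ} (A : Matrix (Fin s) (Fin s) ℕ) (lam : ℝ) (x : Fin s → ℝ)
    (h : (A.map (Nat.cast : ℕ → ℝ)) *ᵥ x = lam • x) (m : ℕ) :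
    ((A ^ m).map (Nat.cast : ℕ → ℝ)) *ᵥ x = lam ^ m • x := by
  have hmap : (A ^ m).map (Nat.cast : ℕ → ℝ) = (A.map (Nat.cast : ℕ → ℝ)) ^ m := by
    simpa [RingHom.mapMatrix_apply] using map_pow (Nat.castRingHom ℝ).mapMatrix A m
  rw [hmap]; exact eig_pow' _ _ _ h m

private lemma colsum_succ {s : ℕ} (A : Matrix (Fin s) (Fin s) ℕ) (m : ℕ) (j : Fin s) :
    ∑ i, (A ^ (m+1)) i j = ∑ t, (∑ i, A i t) * (A ^ m) t j := by
  rw [pow_succ']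
  simp only [Matrix.mul_apply]
  rw [Finset.sum_comm]
  simp [Finset.sum_mul]

private lemma sum_colsum_mul {s : ℕ} (A : Matrix (Fin s) (Fin s) ℕ) (lam : ℝ) (x : Fin s → ℝ)
    (h : (A.map (Nat.cast : ℕ → ℝ)) *ᵥ x = lam • x) (hsum : ∑ i, x i = 1) (m : ℕ) :
    ∑ j, ((∑ i, (A ^ m) i j : ℕ) : ℝ) * x j = lam ^ m := by
  have h1 := eig_pow A lam x h m
  calc ∑ j, ((∑ i, (A ^ m) i j : ℕ) : ℝ) * x j
      = ∑ j, ∑ i, ((A ^ m) i j : ℝ) * x j := by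
        refine Finset.sum_congr rfl fun j _ => ?_
        push_cast
        rw [Finset.sum_mul]
    _ = ∑ i, ∑ j, ((A ^ m) i j : ℝ) * x j := Finset.sum_comm
    _ = ∑ i, (((A ^ m).map (Nat.cast : ℕ → ℝ)) *ᵥ x) i := by
        refine Finset.sum_congr rfl fun i _ => ?_
        simp [Matrix.mulVec, dotProduct, Matrix.map_apply]
    _ = ∑ i, (lam ^ m • x) i := by rw [h1]
    _ = lam ^ m := by simp [← Finset.mul_sum, hsum]

/-- one-step enlargement: there are `k ∈ ℕ` and a primitive
`(s+1)×(s+1)` matrix `A₁` with `A₁ y = λᵏ y` for `y = (x₁,…,x_s, λ-1)ᵀ`; the group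
generated by the entries of `y` is `H(x)`, and `S(A₁) = S(A)`. -/
theorem exists_primitive_matrix_one_more_vertex
    {s : ℕ} (A : Matrix (Fin s) (Fin s) ℕ) (lam : ℝ) (x : Fin s → ℝ)
    (hprim : MatPrimitive A) (hpf : PerronPair A lam x)
    (hsum : ∑ i, x i = 1) (hlam : 1 < lam)
    (y : Fin (s + 1) → ℝ) (hy : y = Fin.snoc x (lam - 1)) :
    ∃ (k : ℕ) (A₁ : Matrix (Fin (s + 1)) (Fin (s + 1)) ℕ), 0 < k ∧
      MatPrimitive A₁ ∧
      (A₁.map (Nat.cast : ℕ → ℝ)) *ᵥ y = lam ^ k • y ∧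
      Hgroup y = Hgroup x ∧
      Sval (lam ^ k) (fun i => y i / ∑ j, y j) = Sval lam x := by
  classical
  obtain ⟨hxpos, heig⟩ := hpf
  obtain ⟨n, hn0, hnpos⟩ := hprim
  have hlam0 : (0:ℝ) < lam := lt_trans one_pos hlam
  have hlamne : lam ≠ 0 := ne_of_gt hlam0
  have hspos : 0 < s := by
    by_contra h
    push_neg at h
    interval_cases s
    simp at hsum
  -- column sums
  set c : Fin s → ℕ := fun j => ∑ i, A i j with hc
  have hcpos : ∀ j, 0 < c j := by
    intro j
    rcases Nat.eq_zero_or_pos (c j) with h0 | h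
    · exfalso
      have hAzero : ∀ i, A i j = 0 := by
        intro i
        have := Finset.sum_eq_zero_iff.mp h0
        exact this i (Finset.mem_univ i)
      obtain ⟨n', rfl⟩ := Nat.exists_eq_succ_of_ne_zero hn0.ne'
      have hz : (A ^ (n' + 1)) ⟨0, hspos⟩ j = 0 := by
        rw [pow_succ, Matrix.mul_apply]
        exact Finset.sum_eq_zero fun t _ => by rw [hAzero t, mul_zero]
      exact absurd hz (hnpos ⟨0, hspos⟩ j).ne'
    · exact h
  -- real identities
  have hpowsum : ∀ m : ℕ, ∑ j, ((∑ i, (A ^ m) i j : ℕ) : ℝ) * x j = lam ^ m :=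
    sum_colsum_mul A lam x heig hsum
  have hlam_eq : ∑ j, (c j : ℝ) * x j = lam := by
    have := hpowsum 1
    simpa [hc] using this
  have hlm1 : ∑ j, ((c j : ℝ) - 1) * x j = lam - 1 := by
    have : ∑ j, ((c j : ℝ) - 1) * x j = (∑ j, (c j : ℝ) * x j) - ∑ j, x j := by
      rw [← Finset.sum_sub_distrib]
      exact Finset.sum_congr rfl fun j _ => by ring
    rw [this, hlam_eq, hsum]
  -- a column with sum ≥ 2
  have hm0 : ∃ m₀, 2 ≤ c m₀ := by
    by_contra h
    push_neg at h
    have hall : ∀ j, c j = 1 := fun j => le_antisymm (Nat.lt_succ_iff.mp (h j)) (hcpos j)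
    have : lam = 1 := by
      rw [← hlam_eq]
      simp [hall, hsum]
    linarith
  obtain ⟨m₀, hm₀⟩ := hm0
  -- column sums of A^(n+1) are ≥ 2
  have hcn1 : ∀ j, 2 ≤ ∑ i, (A ^ (n+1)) i j := by
    intro j
    rw [colsum_succ]
    calc (2:ℕ) = 2 * 1 := by norm_num
      _ ≤ c m₀ * (A ^ n) m₀ j := Nat.mul_le_mul hm₀ (hnpos m₀ j)
      _ ≤ ∑ t, c t * (A ^ n) t j :=
          Finset.single_le_sum (f := fun t => c t * (A ^ n) t j)
            (fun t _ => Nat.zero_le _) (Finset.mem_univ m₀)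
  -- growth of entries of powers
  have hgrow : ∀ t i j, 2 ^ t ≤ (A ^ (n + t * (n+1))) i j := by
    intro t
    induction t with
    | zero => intro i j; simpa using Nat.one_le_iff_ne_zero.mpr (hnpos i j).ne'
    | succ t ih =>
      intro i j
      have harith : n + (t+1) * (n+1) = (n + t*(n+1)) + (n+1) := by ring
      rw [harith, pow_add A (n + t*(n+1)) (n+1), Matrix.mul_apply]
      calc 2 ^ (t+1) = 2 ^ t * 2 := by ring
        _ ≤ 2 ^ t * ∑ m, (A ^ (n+1)) m j := Nat.mul_le_mul_left _ (hcn1 j)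
        _ = ∑ m, 2 ^ t * (A ^ (n+1)) m j := Finset.mul_sum _ _ _
        _ ≤ ∑ m, (A ^ (n + t*(n+1))) i m * (A ^ (n+1)) m j :=
            Finset.sum_le_sum fun m _ => Nat.mul_le_mul_right _ (ih i m)
  -- choose k
  set t₀ : ℕ := Finset.univ.sup c with ht₀
  set k : ℕ := n + t₀ * (n + 1) with hk
  have hk0 : 0 < k := Nat.lt_of_lt_of_le hn0 (Nat.le_add_right _ _)
  have hkey : ∀ i j, c j ≤ (A ^ k) i j := by
    intro i j
    calc c j ≤ t₀ := Finset.le_sup (Finset.mem_univ j)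
      _ ≤ 2 ^ t₀ := (Nat.lt_two_pow_self (n := t₀)).le
      _ ≤ (A ^ k) i j := hgrow t₀ i j
  set ck : Fin s → ℕ := fun j => ∑ i, (A ^ k) i j with hck
  set ck1 : Fin s → ℕ := fun j => ∑ i, (A ^ (k+1)) i j with hck1
  have hck1ge : ∀ j, ck j + c j ≤ ck1 j := by
    intro j
    have heq : ck1 j = ∑ u, c u * (A ^ k) u j := colsum_succ A k j
    have hXsum : ck j = (A ^ k) m₀ j + ∑ u ∈ Finset.univ.erase m₀, (A ^ k) u j :=
      (Finset.add_sum_erase _ (fun u => (A ^ k) u j) (Finset.mem_univ m₀)).symm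
    have hstep : 2 * (A ^ k) m₀ j + ∑ u ∈ Finset.univ.erase m₀, (A ^ k) u j
        ≤ ∑ u, c u * (A ^ k) u j := by
      rw [← Finset.add_sum_erase _ (fun u => c u * (A ^ k) u j) (Finset.mem_univ m₀)]
      exact Nat.add_le_add (Nat.mul_le_mul_right _ hm₀)
        (Finset.sum_le_sum fun u _ => Nat.le_mul_of_pos_left _ (hcpos u))
    have hkm := hkey m₀ j
    rw [heq]
    omega
    -- vector y facts
  have hylast : y (Fin.last s) = lam - 1 := by rw [hy]; simp
  have hycast : ∀ j' : Fin s, y j'.castSucc = x j' := by intro j'; rw [hy]; simp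
  have hysum : ∑ j, y j = lam := by
    rw [Fin.sum_univ_castSucc]
    simp only [hycast, hylast, hsum]
    ring
  -- the enlarged matrix
  set B : Matrix (Fin (s+1)) (Fin (s+1)) ℕ := Matrix.of fun i j =>
    Fin.lastCases
      (Fin.lastCases 1 (fun j' => ck1 j' - ck j' - c j' + 1) j)
      (fun i' => Fin.lastCases 1 (fun j' => (A ^ k) i' j' - c j' + 1) j)
      i with hB
  have hB1 : ∀ (i' j' : Fin s), B i'.castSucc j'.castSucc = (A ^ k) i' j' - c j' + 1 := by
    intro i' j'; simp [hB]
  have hB2 : ∀ (i' : Fin s), B i'.castSucc (Fin.last s) = 1 := by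
    intro i'; simp [hB]
  have hB3 : ∀ (j' : Fin s), B (Fin.last s) j'.castSucc = ck1 j' - ck j' - c j' + 1 := by
    intro j'; simp [hB]
  have hB4 : B (Fin.last s) (Fin.last s) = 1 := by simp [hB]
  have hBpos : ∀ i j, 0 < B i j := by
    intro i j
    induction i using Fin.lastCases with
    | last =>
      induction j using Fin.lastCases with
      | last => rw [hB4]; norm_num
      | cast j' => rw [hB3]; omega
    | cast i' =>
      induction j using Fin.lastCases with
      | last => rw [hB2]; norm_num
      | cast j' => rw [hB1]; omega
  have hBprim : MatPrimitive B := ⟨1, one_pos, fun i j => by rw [pow_one]; exact hBpos i j⟩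
  -- cast values of entries
  have hcastB1 : ∀ i' j', ((B i'.castSucc j'.castSucc : ℕ) : ℝ)
      = ((A ^ k) i' j' : ℝ) - (c j' : ℝ) + 1 := by
    intro i' j'
    rw [hB1, Nat.cast_add, Nat.cast_sub (hkey i' j'), Nat.cast_one]
  have hcastB3 : ∀ j', ((B (Fin.last s) j'.castSucc : ℕ) : ℝ)
      = (ck1 j' : ℝ) - (ck j' : ℝ) - (c j' : ℝ) + 1 := by
    intro j'
    have h1 := hck1ge j'
    rw [hB3, Nat.cast_add, Nat.cast_sub (by omega), Nat.cast_sub (by omega), Nat.cast_one]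
  -- eigen computations
  have hxk : ∀ i', ∑ j', ((A ^ k) i' j' : ℝ) * x j' = lam ^ k * x i' := by
    intro i'
    have h1 := congrFun (eig_pow A lam x heig k) i'
    simpa [Matrix.mulVec, dotProduct, Matrix.map_apply] using h1
  have hckx : ∑ j', ((ck j' : ℕ) : ℝ) * x j' = lam ^ k := hpowsum k
  have hck1x : ∑ j', ((ck1 j' : ℕ) : ℝ) * x j' = lam ^ (k+1) := hpowsum (k+1)
  have heigB : (B.map (Nat.cast : ℕ → ℝ)) *ᵥ y = lam ^ k • y := by
    funext i
    have hmv : ((B.map (Nat.cast : ℕ → ℝ)) *ᵥ y) i = ∑ j, ((B i j : ℕ) : ℝ) * y j := by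
      simp [Matrix.mulVec, dotProduct, Matrix.map_apply]
    rw [hmv, Fin.sum_univ_castSucc]
    induction i using Fin.lastCases with
    | last =>
      rw [hB4, hylast]
      have hrow : ∑ j' : Fin s, ((B (Fin.last s) j'.castSucc : ℕ) : ℝ) * y j'.castSucc
          = lam ^ (k+1) - lam ^ k - (lam - 1) := by
        calc ∑ j' : Fin s, ((B (Fin.last s) j'.castSucc : ℕ) : ℝ) * y j'.castSucc
            = ∑ j' : Fin s, ((ck1 j' : ℝ) * x j' - (ck j' : ℝ) * x j'
                - ((c j' : ℝ) - 1) * x j') := by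
              refine Finset.sum_congr rfl fun j' _ => ?_
              rw [hcastB3, hycast]; ring
          _ = lam ^ (k+1) - lam ^ k - (lam - 1) := by
              rw [Finset.sum_sub_distrib, Finset.sum_sub_distrib, hck1x, hckx, hlm1]
      rw [hrow]
      have : (lam ^ k • y) (Fin.last s) = lam ^ k * (lam - 1) := by
        rw [Pi.smul_apply, hylast, smul_eq_mul]
      rw [this, pow_succ]
      ring
    | cast i' =>
      rw [hB2, hylast]
      have hrow : ∑ j' : Fin s, ((B i'.castSucc j'.castSucc : ℕ) : ℝ) * y j'.castSucc
          = lam ^ k * x i' - (lam - 1) := by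
        calc ∑ j' : Fin s, ((B i'.castSucc j'.castSucc : ℕ) : ℝ) * y j'.castSucc
            = ∑ j' : Fin s, (((A ^ k) i' j' : ℝ) * x j' - ((c j' : ℝ) - 1) * x j') := by
              refine Finset.sum_congr rfl fun j' _ => ?_
              rw [hcastB1, hycast]; ring
          _ = lam ^ k * x i' - (lam - 1) := by
              rw [Finset.sum_sub_distrib, hxk, hlm1]
      rw [hrow]
      have : (lam ^ k • y) i'.castSucc = lam ^ k * x i' := by
        rw [Pi.smul_apply, hycast, smul_eq_mul]
      rw [this]
      ring
  -- Hgroup equality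
  have hxmem : ∀ i, x i ∈ AddSubgroup.closure (Set.range x) :=
    fun i => AddSubgroup.subset_closure ⟨i, rfl⟩
  have hlm1mem : lam - 1 ∈ AddSubgroup.closure (Set.range x) := by
    have hlm1' : lam - 1 = ∑ j, (c j - 1) • x j := by
      rw [← hlm1]
      refine Finset.sum_congr rfl fun j _ => ?_
      rw [nsmul_eq_mul, Nat.cast_sub (hcpos j), Nat.cast_one]
    rw [hlm1']
    exact AddSubgroup.sum_mem _ fun j _ => AddSubgroup.nsmul_mem _ (hxmem j) _
  have hHgroup : AddSubgroup.closure (Set.range y) = AddSubgroup.closure (Set.range x) := by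
    apply le_antisymm
    · rw [AddSubgroup.closure_le]
      rintro _ ⟨i, rfl⟩
      induction i using Fin.lastCases with
      | last => rw [hylast]; exact hlm1mem
      | cast i' => rw [hycast i']; exact hxmem i'
    · apply AddSubgroup.closure_mono
      rintro _ ⟨i, rfl⟩
      exact ⟨i.castSucc, hycast i⟩
  -- stability under multiplication by lam
  have hmul_lam : ∀ h ∈ AddSubgroup.closure (Set.range x),
      lam * h ∈ AddSubgroup.closure (Set.range x) := by
    have hle : AddSubgroup.closure (Set.range x) ≤
        (AddSubgroup.closure (Set.range x)).comap (AddMonoidHom.mulLeft lam) := by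
      rw [AddSubgroup.closure_le]
      rintro _ ⟨i, rfl⟩
      show x i ∈ (AddSubgroup.closure (Set.range x)).comap (AddMonoidHom.mulLeft lam)
      rw [AddSubgroup.mem_comap]
      show lam * x i ∈ AddSubgroup.closure (Set.range x)
      have h1 := congrFun heig i
      simp only [Matrix.mulVec, dotProduct, Matrix.map_apply, Pi.smul_apply,
        smul_eq_mul] at h1
      rw [← h1]
      have : ∑ j, ((A i j : ℕ) : ℝ) * x j = ∑ j, A i j • x j :=
        Finset.sum_congr rfl fun j _ => (nsmul_eq_mul _ _).symm
      rw [this]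
      exact AddSubgroup.sum_mem _ fun j _ => AddSubgroup.nsmul_mem _ (hxmem j) _
    intro h hh
    exact AddSubgroup.mem_comap.mp (hle hh)
  have hpow_lam : ∀ (t : ℕ) (h : ℝ), h ∈ AddSubgroup.closure (Set.range x) →
      lam ^ t * h ∈ AddSubgroup.closure (Set.range x) := by
    intro t
    induction t with
    | zero => intro h hh; simpa using hh
    | succ u ih =>
      intro h hh
      have h2 : lam ^ (u+1) * h = lam * (lam ^ u * h) := by ring
      rw [h2]
      exact hmul_lam _ (ih h hh)
  -- Hgroup of y / lam
  have hmemdiv : ∀ z : ℝ, z ∈ Hgroup (fun i => y i / lam) ↔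
      ∃ g, g ∈ AddSubgroup.closure (Set.range x) ∧ z = g / lam := by
    intro z
    have hfun : (fun i => y i / lam) = fun i => (AddMonoidHom.mulLeft lam⁻¹) (y i) := by
      funext i
      simp [AddMonoidHom.mulLeft, div_eq_mul_inv, mul_comm]
    have hr : Set.range (fun i => (AddMonoidHom.mulLeft lam⁻¹) (y i))
        = (AddMonoidHom.mulLeft lam⁻¹) '' Set.range y := by
      ext w
      constructor
      · rintro ⟨i, rfl⟩; exact ⟨y i, ⟨i, rfl⟩, rfl⟩
      · rintro ⟨v, ⟨i, rfl⟩, rfl⟩; exact ⟨i, rfl⟩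
    have himg : AddSubgroup.closure (Set.range (fun i => y i / lam))
        = AddSubgroup.map (AddMonoidHom.mulLeft lam⁻¹)
            (AddSubgroup.closure (Set.range x)) := by
      rw [hfun, hr, ← AddMonoidHom.map_closure, hHgroup]
    show z ∈ (AddSubgroup.closure (Set.range (fun i => y i / lam)) : Set ℝ) ↔ _
    rw [himg]
    constructor
    · intro hz
      obtain ⟨g, hg, hgz⟩ := AddSubgroup.mem_map.mp hz
      refine ⟨g, hg, ?_⟩
      rw [← hgz]
      show lam⁻¹ * g = g / lam
      rw [div_eq_mul_inv, mul_comm]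
    · rintro ⟨g, hg, rfl⟩
      refine AddSubgroup.mem_map.mpr ⟨g, hg, ?_⟩
      show lam⁻¹ * g = g / lam
      rw [div_eq_mul_inv, mul_comm]
  -- conclude
  refine ⟨k, B, hk0, hBprim, heigB, ?_, ?_⟩
  · exact congrArg (fun H : AddSubgroup ℝ => (H : Set ℝ)) hHgroup
  · have hfun2 : (fun i => y i / ∑ j, y j) = (fun i => y i / lam) := by
      funext i; rw [hysum]
    rw [hfun2]
    ext z
    simp only [Sval, Set.mem_setOf_eq]
    constructor
    · rintro ⟨N, h, hh, rfl⟩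
      obtain ⟨g, hg, rfl⟩ := (hmemdiv h).mp hh
      refine ⟨k * N + 1, g, hg, ?_⟩
      rw [div_div]
      congr 1
      rw [← pow_mul, ← pow_succ']
    · rintro ⟨N, g, hg, rfl⟩
      have hNle : N ≤ k * N + 1 :=
        le_trans (Nat.le_mul_of_pos_left N hk0) (Nat.le_succ _)
      refine ⟨N, (lam ^ (k * N + 1 - N) * g) / lam,
        (hmemdiv _).mpr ⟨lam ^ (k * N + 1 - N) * g, hpow_lam _ _ hg, rfl⟩, ?_⟩
      rw [div_div, ← pow_mul, ← pow_succ']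
      rw [div_eq_div_iff (pow_ne_zero _ hlamne) (pow_ne_zero _ hlamne)]
      have hexp : k * N + 1 - N + N = k * N + 1 := Nat.sub_add_cancel hNle
      calc g * lam ^ (k * N + 1) = g * (lam ^ (k * N + 1 - N) * lam ^ N) := by
            rw [← pow_add, hexp]
        _ = lam ^ (k * N + 1 - N) * g * lam ^ N := by ring
end

section
/- Let ζ be a primitive substitution on the alphabet 𝒜 = {a₁,…,a_m} with m ≥ 2 such that for every j the word ζ(a_j) begins with the two-letter word a₁a_j and ends with the letter a₁. Then p_ζ(n+1) − p_ζ(n) ≥ m − 1 for all n ≥ 1, and consequently p_ζ(n) > (m−1)n for all n ≥ 1. -/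
open Matrix

namespace SubstAux

variable {A : Type*}

lemma iterate_wordApply_eq (σ : A → List A) : ∀ (k : ℕ) (w : List A),
    (wordApply σ)^[k] w = w.flatMap (substIter σ k) := by
  intro k
  induction k with
  | zero =>
    intro w
    rw [Function.iterate_zero_apply, show substIter σ 0 = fun a : A => [a] from rfl]
    simp
  | succ k ih =>
    intro w
    rw [Function.iterate_succ_apply, ih]
    show (wordApply σ w).flatMap _ = _
    unfold wordApply
    rw [List.flatMap_assoc]
    congr 1
    funext a
    rw [substIter, Function.iterate_succ_apply, ih]
    congr 1
    simp [wordApply]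

lemma substIter_zero (σ : A → List A) (a : A) : substIter σ 0 a = [a] := rfl

lemma substIter_succ (σ : A → List A) (k : ℕ) (a : A) :
    substIter σ (k+1) a = (σ a).flatMap (substIter σ k) := by
  have h : wordApply σ [a] = σ a := by simp [wordApply]
  rw [substIter, Function.iterate_succ_apply, h, iterate_wordApply_eq]

lemma substIter_one (σ : A → List A) (a : A) : substIter σ 1 a = σ a := by
  rw [substIter_succ, show substIter σ 0 = fun a : A => [a] from rfl]; simp

lemma substIter_add (σ : A → List A) (k n : ℕ) (a : A) :
    substIter σ (k + n) a = (substIter σ n a).flatMap (substIter σ k) := by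
  rw [substIter, Function.iterate_add_apply, ← substIter, iterate_wordApply_eq]

lemma substIter_ne_nil {σ : A → List A} (hσ : ∀ b, σ b ≠ []) :
    ∀ (k : ℕ) (a : A), substIter σ k a ≠ [] := by
  intro k
  induction k with
  | zero => intro a; simp [substIter_zero]
  | succ k ih =>
    intro a
    rw [substIter_succ]
    obtain ⟨b, t, h⟩ : ∃ b t, σ a = b :: t := by
      cases hh : σ a with
      | nil => exact absurd hh (hσ a)
      | cons b t => exact ⟨b, t, rfl⟩
    rw [h, List.flatMap_cons]
    intro hc
    exact ih b (List.append_eq_nil_iff.mp hc).1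

lemma infix_mem_lang {σ : A → List A} {w w' : List A} (h : w' <:+: w) (hw : w ∈ Lang σ) :
    w' ∈ Lang σ := by
  obtain ⟨n, a, hinf⟩ := hw; exact ⟨n, a, h.trans hinf⟩

lemma flatMap_mem_lang {σ : A → List A} {w : List A} (hw : w ∈ Lang σ) (k : ℕ) :
    w.flatMap (substIter σ k) ∈ Lang σ := by
  obtain ⟨n, a, u, v, huv⟩ := hw
  refine ⟨k + n, a, u.flatMap (substIter σ k), v.flatMap (substIter σ k), ?_⟩
  rw [substIter_add, ← huv]
  simp [List.flatMap_append]

lemma suffix_a1 {ζ : A → List A} {a1 : A} (hsuf : ∀ j, [a1] <:+ ζ j) :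
    ∀ (k : ℕ) (c : A), [a1] <:+ substIter ζ (k+1) c := by
  intro k
  induction k with
  | zero => intro c; rw [substIter_one]; exact hsuf c
  | succ k ih =>
    intro c
    obtain ⟨q, hq⟩ := hsuf c
    have h1 : substIter ζ (k+1) a1 <:+ substIter ζ (k+1+1) c := by
      rw [substIter_succ ζ (k+1) c, ← hq, List.flatMap_append]
      simp only [List.flatMap_cons, List.flatMap_nil, List.append_nil]
      exact List.suffix_append _ _
    exact (ih a1).trans h1

/-- The common prefix words. -/
def Pw (σ : A → List A) (a1 : A) : ℕ → List A
  | 0 => []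
  | (k+1) => substIter σ k a1 ++ Pw σ a1 k

lemma Pw_prefix {ζ : A → List A} {a1 : A} (hpre : ∀ j, [a1, j] <+: ζ j) :
    ∀ (k : ℕ) (j : A), Pw ζ a1 (k+1) ++ [j] <+: substIter ζ (k+1) j := by
  intro k
  induction k with
  | zero =>
    intro j
    have h0 : Pw ζ a1 1 = [a1] := by simp [Pw, substIter_zero]
    rw [h0, substIter_one]
    exact hpre j
  | succ k ih =>
    intro j
    obtain ⟨t, ht⟩ := hpre j
    obtain ⟨r, hr⟩ := ih j
    refine ⟨r ++ t.flatMap (substIter ζ (k+1)), ?_⟩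
    rw [substIter_succ ζ (k+1) j, ← ht, List.flatMap_append]
    simp only [List.flatMap_cons, List.flatMap_nil, List.append_nil]
    rw [← hr]
    simp [Pw, List.append_assoc]

lemma Pw_length {ζ : A → List A} {a1 : A} (hζ : ∀ b, ζ b ≠ []) :
    ∀ k, k ≤ (Pw ζ a1 k).length := by
  intro k
  induction k with
  | zero => simp [Pw]
  | succ k ih =>
    have h1 : 1 ≤ (substIter ζ k a1).length :=
      List.length_pos_iff.mpr (substIter_ne_nil hζ k a1)
    simp only [Pw, List.length_append]
    omega


section Main

variable {A : Type*} {ζ : A → List A} {a1 : A}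
variable (hpre : ∀ j : A, [a1, j] <+: ζ j) (hsuf : ∀ j : A, [a1] <:+ ζ j)
variable (hprim : ∃ n : ℕ, 0 < n ∧ ∀ a b : A, b ∈ substIter ζ n a)

include hpre in
lemma zeta_ne_nil : ∀ b, ζ b ≠ [] := by
  intro b hb
  obtain ⟨t, ht⟩ := hpre b
  rw [hb] at ht
  exact List.cons_ne_nil _ _ (List.append_eq_nil_iff.mp ht).1

include hprim in
lemma singleton_mem_lang (b : A) : [b] ∈ Lang ζ := by
  obtain ⟨N, hN, hp⟩ := hprim
  obtain ⟨s, t, hst⟩ := List.append_of_mem (hp b b)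
  exact ⟨N, b, s, t, by rw [hst]; simp⟩

include hpre hsuf hprim in
lemma exists_pair (a : A) : ∃ x, [a, x] ∈ Lang ζ := by
  obtain ⟨N, hN, hp⟩ := hprim
  obtain ⟨s, t, hst⟩ := List.append_of_mem (hp a1 a)
  cases t with
  | cons x t' =>
    exact ⟨x, N, a1, s, t', by rw [hst]; simp⟩
  | nil =>
    -- a is the last letter of substIter ζ N a1, which is a1
    obtain ⟨M, rfl⟩ : ∃ M, N = M + 1 := ⟨N - 1, by omega⟩
    obtain ⟨q, hq⟩ := suffix_a1 hsuf M a1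
    have hsa : s ++ [a] = q ++ [a1] := by
      rw [hq, hst]
    have ha : a = a1 := by
      have h12 := (List.append_inj' hsa rfl).2
      simp only [List.cons.injEq, and_true] at h12
      exact h12
    refine ⟨a1, 1, a1, ?_⟩
    rw [ha, substIter_one]
    exact (hpre a1).isInfix
  
include hpre hsuf hprim in
lemma exists_right_ext {w : List A} (hw : w ∈ Lang ζ) : ∃ b, w ++ [b] ∈ Lang ζ := by
  obtain ⟨n, a, u, v, huv⟩ := hw
  cases v with
  | cons b v' =>
    exact ⟨b, n, a, u, v', by rw [← huv]; simp⟩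
  | nil =>
    obtain ⟨x, hx⟩ := exists_pair hpre hsuf hprim a
    have h2 : substIter ζ n a ++ substIter ζ n x ∈ Lang ζ := by
      have := flatMap_mem_lang hx n
      simpa using this
    obtain ⟨y, ys, hy⟩ : ∃ y ys, substIter ζ n x = y :: ys := by
      cases hh : substIter ζ n x with
      | nil => exact absurd hh (substIter_ne_nil (zeta_ne_nil hpre) n x)
      | cons y ys => exact ⟨y, ys, rfl⟩
    refine ⟨y, infix_mem_lang ⟨u, ys, ?_⟩ h2⟩
    rw [hy, ← huv]
    simp

include hpre in
lemma special_word (n : ℕ) (hn : 1 ≤ n) :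
    ∃ W : List A, W.length = n ∧ ∀ j : A, W ++ [j] ∈ Lang ζ := by
  classical
  obtain ⟨k, rfl⟩ : ∃ k, n = k + 1 := ⟨n - 1, by omega⟩
  set P := Pw ζ a1 (k+1) with hP
  have hlen : k + 1 ≤ P.length := Pw_length (zeta_ne_nil hpre) (k+1)
  refine ⟨P.drop (P.length - (k+1)), ?_, ?_⟩
  · rw [List.length_drop]; omega
  · intro j
    have hsfx : P.drop (P.length - (k+1)) ++ [j] <:+ P ++ [j] := by
      obtain ⟨s, hs⟩ := List.drop_suffix (P.length - (k+1)) P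
      exact ⟨s, by rw [← List.append_assoc, hs]⟩
    exact ⟨k+1, j, hsfx.isInfix.trans (Pw_prefix hpre k j).isInfix⟩

end Main

end SubstAux

/-- a primitive substitution on `m ≥ 2` letters whose images begin with
`a₁ a_j` and end with `a₁` has complexity increments at least `m - 1`, hence
`p_ζ(n) > (m-1)n`. -/
theorem complexity_lower_bound_of_proper_form
    {A : Type*} [Fintype A] (m : ℕ) (hcard : Fintype.card A = m) (hm : 2 ≤ m)
    (a1 : A) (ζ : A → List A) (hprim : IsPrimitive ζ)
    (hpre : ∀ j : A, [a1, j] <+: ζ j)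
    (hsuf : ∀ j : A, [a1] <:+ ζ j) :
    (∀ n : ℕ, 1 ≤ n → substComplexity ζ n + (m - 1) ≤ substComplexity ζ (n + 1)) ∧
    (∀ n : ℕ, 1 ≤ n → (m - 1) * n < substComplexity ζ n) := by
  classical
  have hfin : ∀ k, {w | w ∈ Lang ζ ∧ w.length = k}.Finite := fun k =>
    (List.finite_length_eq A k).subset (fun w hw => hw.2)
  have hcomp : ∀ k, substComplexity ζ k = (hfin k).toFinset.card := fun k =>
    Set.ncard_eq_toFinset_card _ (hfin k)
  set extF : List A → A := fun w =>
    if h : ∃ b, w ++ [b] ∈ Lang ζ then h.choose else a1 with hextF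
  have hext : ∀ w ∈ Lang ζ, w ++ [extF w] ∈ Lang ζ := by
    intro w hw
    have h : ∃ b, w ++ [b] ∈ Lang ζ := SubstAux.exists_right_ext hpre hsuf hprim hw
    simp only [hextF, dif_pos h]
    exact h.choose_spec
  have key : ∀ n : ℕ, 1 ≤ n → substComplexity ζ n + (m - 1) ≤ substComplexity ζ (n + 1) := by
    intro n hn
    obtain ⟨W, hWlen, hWmem⟩ := SubstAux.special_word hpre n hn
    set B := (hfin n).toFinset with hB
    set T := (hfin (n+1)).toFinset with hT
    have hinj : Set.InjOn (fun w => w ++ [extF w]) B := by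
      intro x _ y _ hxy
      have := congrArg List.dropLast hxy
      simpa [List.dropLast_concat] using this
    have hIsub : B.image (fun w => w ++ [extF w]) ⊆ T := by
      intro w hw
      simp only [Finset.mem_image] at hw
      obtain ⟨v, hv, rfl⟩ := hw
      rw [hB, Set.Finite.mem_toFinset] at hv
      rw [hT, Set.Finite.mem_toFinset]
      exact ⟨hext v hv.1, by simp [hv.2]⟩
    set X := ((Finset.univ : Finset A).erase (extF W)).image (fun j => W ++ [j]) with hX
    have hsing : Function.Injective (fun j : A => W ++ [j]) := by
      intro j j' h
      simpa using h
    have hXcard : X.card = m - 1 := by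
      rw [hX, Finset.card_image_of_injective _ hsing,
        Finset.card_erase_of_mem (Finset.mem_univ _), Finset.card_univ, hcard]
    have hXsub : X ⊆ T := by
      intro w hw
      simp only [hX, Finset.mem_image, Finset.mem_erase] at hw
      obtain ⟨j, _, rfl⟩ := hw
      rw [hT, Set.Finite.mem_toFinset]
      exact ⟨hWmem j, by simp [hWlen]⟩
    have hdisj : Disjoint (B.image fun w => w ++ [extF w]) X := by
      rw [Finset.disjoint_left]
      intro w hwI hwX
      simp only [Finset.mem_image] at hwI
      obtain ⟨v, hv, hveq⟩ := hwI
      simp only [hX, Finset.mem_image, Finset.mem_erase] at hwX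
      obtain ⟨j, hj, hjeq⟩ := hwX
      have heq : v ++ [extF v] = W ++ [j] := hveq.trans hjeq.symm
      have hvW : v = W := by
        have := congrArg List.dropLast heq
        simpa [List.dropLast_concat] using this
      rw [hvW] at heq
      have : extF W = j := by
        have h2 := List.append_cancel_left heq
        simpa using h2
      exact hj.1 this.symm
    have hIcard : (B.image fun w => w ++ [extF w]).card = B.card :=
      Finset.card_image_of_injOn hinj
    have hle : B.card + (m-1) ≤ T.card := by
      calc B.card + (m-1)
          = (B.image fun w => w ++ [extF w]).card + X.card := by rw [hIcard, hXcard]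
        _ = ((B.image fun w => w ++ [extF w]) ∪ X).card :=
            (Finset.card_union_of_disjoint hdisj).symm
        _ ≤ T.card := Finset.card_le_card (Finset.union_subset hIsub hXsub)
    rw [hcomp n, hcomp (n+1)]
    exact hle
  refine ⟨key, ?_⟩
  have hbase : m ≤ substComplexity ζ 1 := by
    rw [hcomp 1]
    have hsub : (Finset.univ : Finset A).image (fun b => [b]) ⊆ (hfin 1).toFinset := by
      intro w hw
      simp only [Finset.mem_image] at hw
      obtain ⟨b, _, rfl⟩ := hw
      rw [Set.Finite.mem_toFinset]
      exact ⟨SubstAux.singleton_mem_lang hprim b, rfl⟩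
    calc m = ((Finset.univ : Finset A).image (fun b => [b])).card := by
          rw [Finset.card_image_of_injective _ (fun b b' h => by simpa using h),
            Finset.card_univ, hcard]
      _ ≤ _ := Finset.card_le_card hsub
  intro n hn
  induction n with
  | zero => omega
  | succ n ih =>
    rcases Nat.eq_zero_or_pos n with h0 | h1
    · subst h0
      have : m - 1 < m := by omega
      calc (m-1) * 1 = m - 1 := by ring
        _ < m := this
        _ ≤ substComplexity ζ 1 := hbase
    · have hlt := ih h1
      calc (m-1) * (n+1) = (m-1)*n + (m-1) := by ring
        _ < substComplexity ζ n + (m-1) := by omega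
        _ ≤ substComplexity ζ (n+1) := key n h1
end

section
/- Let A be a primitive s×s matrix with nonnegative integer entries, λ its Perron–Frobenius eigenvalue, and x = (x₁,…,x_s)ᵀ the strictly positive eigenvector normalized by Σᵢ xᵢ = 1. Then each xᵢ belongs to the field ℚ(λ), and the ℚ-vector subspace of ℝ spanned by x₁,…,x_s has dimension equal to deg λ, the degree of λ over ℚ. -/
open Matrix

section PerronAux

variable {s : ℕ}

/-- Powers of the eigenvalue equation. -/
lemma eig_pow_aux (M : Matrix (Fin s) (Fin s) ℝ) (lam : ℝ) (z : Fin s → ℝ)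
    (hz : M *ᵥ z = lam • z) (n : ℕ) : (M ^ n) *ᵥ z = (lam ^ n) • z := by
  induction n with
  | zero => simp
  | succ n ih =>
      rw [pow_succ, ← Matrix.mulVec_mulVec, hz, Matrix.mulVec_smul, ih, smul_smul,
        pow_succ, mul_comm]

/-- Geometric simplicity of the Perron eigenvalue: every real eigenvector for `lam`
is a multiple of the positive eigenvector `x`. -/
lemma perron_simple (A : Matrix (Fin s) (Fin s) ℕ) (lam : ℝ) (x u : Fin s → ℝ)
    [Nonempty (Fin s)]
    (hprim : MatPrimitive A) (hxpos : ∀ i, 0 < x i)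
    (hx : (A.map (Nat.cast : ℕ → ℝ)) *ᵥ x = lam • x)
    (hu : (A.map (Nat.cast : ℕ → ℝ)) *ᵥ u = lam • u) :
    ∃ t : ℝ, u = t • x := by
  classical
  obtain ⟨n, hn, hpos⟩ := hprim
  obtain ⟨i0, -, hi0⟩ := Finset.exists_max_image Finset.univ (fun i => u i / x i)
    Finset.univ_nonempty
  set t : ℝ := u i0 / x i0 with ht
  refine ⟨t, ?_⟩
  set z : Fin s → ℝ := fun i => t * x i - u i with hzdef
  have hz0 : ∀ i, 0 ≤ z i := by
    intro i
    have h1 : u i / x i ≤ t := hi0 i (Finset.mem_univ i)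
    have := (div_le_iff₀ (hxpos i)).mp h1
    simp only [hzdef]
    nlinarith [this]
  have hzi0 : z i0 = 0 := by
    simp only [hzdef, ht]
    rw [div_mul_cancel₀ _ (hxpos i0).ne', sub_self]
  have hze : (A.map (Nat.cast : ℕ → ℝ)) *ᵥ z = lam • z := by
    have hzeq : z = t • x - u := by funext i; simp [hzdef, smul_eq_mul]
    rw [hzeq, Matrix.mulVec_sub, Matrix.mulVec_smul, hx, hu, smul_sub, smul_comm]
  have hzzero : z = 0 := by
    by_contra hzz
    obtain ⟨j, hj⟩ := Function.ne_iff.mp hzz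
    have hzj : 0 < z j := lt_of_le_of_ne (hz0 j) (Ne.symm hj)
    have hmap : (A.map (Nat.cast : ℕ → ℝ)) ^ n = (A ^ n).map (Nat.cast : ℕ → ℝ) := by
      have h1 := map_pow ((Nat.castRingHom ℝ).mapMatrix) A n
      simpa [RingHom.mapMatrix_apply] using h1.symm
    have hkey := congrFun (eig_pow_aux _ lam z hze n) i0
    rw [hmap] at hkey
    have hlhs : 0 < ((A ^ n).map (Nat.cast : ℕ → ℝ) *ᵥ z) i0 := by
      rw [Matrix.mulVec, dotProduct]
      refine Finset.sum_pos' (fun k _ => ?_) ⟨j, Finset.mem_univ j, ?_⟩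
      · simp only [Matrix.map_apply]
        exact mul_nonneg (Nat.cast_nonneg _) (hz0 k)
      · simp only [Matrix.map_apply]
        exact mul_pos (by exact_mod_cast hpos i0 j) hzj
    rw [hkey] at hlhs
    simp [hzi0] at hlhs
  funext i
  have := congrFun hzzero i
  simp only [hzdef, Pi.zero_apply] at this
  have : u i = t * x i := by linarith
  simp [this, smul_eq_mul]

end PerronAux

/-- the entries of the normalized Perron eigenvector of a primitive matrix
lie in `ℚ(λ)` and span a `ℚ`-subspace of `ℝ` of dimension `deg λ`. -/
theorem perron_eigenvector_entries_span
    {s : ℕ} (A : Matrix (Fin s) (Fin s) ℕ) (lam : ℝ) (x : Fin s → ℝ)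
    (hprim : MatPrimitive A) (hpf : PerronPair A lam x) (hsum : ∑ i, x i = 1) :
    (∀ i, x i ∈ IntermediateField.adjoin ℚ ({lam} : Set ℝ)) ∧
    Module.finrank ℚ (Submodule.span ℚ (Set.range x)) = (minpoly ℚ lam).natDegree := by
  classical
  obtain ⟨hxpos, heig⟩ := hpf
  set Aℝ : Matrix (Fin s) (Fin s) ℝ := A.map (Nat.cast : ℕ → ℝ) with hAR
  have hne : Nonempty (Fin s) := by
    rcases isEmpty_or_nonempty (Fin s) with h | h
    · exfalso
      rw [Finset.univ_eq_empty, Finset.sum_empty] at hsum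
      norm_num at hsum
    · exact h
  set K := IntermediateField.adjoin ℚ ({lam} : Set ℝ) with hKdef
  have hlamK : lam ∈ K := IntermediateField.mem_adjoin_simple_self ℚ lam
  have hxne : x ≠ 0 := by
    intro h
    obtain ⟨i⟩ := hne
    have hpi := hxpos i
    rw [h] at hpi
    simp at hpi
  -- membership of the entries of `Aℝ - lam • 1` in K
  have hmemM : ∀ i j, (Aℝ - lam • (1 : Matrix (Fin s) (Fin s) ℝ)) i j ∈ K := by
    intro i j
    rw [Matrix.sub_apply]
    refine sub_mem ?_ ?_
    · rw [hAR, Matrix.map_apply]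
      exact IntermediateField.natCast_mem K (A i j)
    · rcases eq_or_ne i j with h | h
      · subst h
        simpa [Matrix.smul_apply, Matrix.one_apply_eq] using hlamK
      · simp [Matrix.smul_apply, Matrix.one_apply_ne h, zero_mem]
  set M : Matrix (Fin s) (Fin s) K :=
    Matrix.of (fun i j => (⟨_, hmemM i j⟩ : K)) with hMdef
  have hMmap : M.map (algebraMap K ℝ) = Aℝ - lam • (1 : Matrix (Fin s) (Fin s) ℝ) := by
    ext i j
    rfl
  have hdetR : (Aℝ - lam • (1 : Matrix (Fin s) (Fin s) ℝ)).det = 0 := by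
    refine Matrix.exists_mulVec_eq_zero_iff.mp ⟨x, hxne, ?_⟩
    rw [Matrix.sub_mulVec, heig, Matrix.smul_mulVec, Matrix.one_mulVec, sub_self]
  have hdetK : M.det = 0 := by
    apply (algebraMap K ℝ).injective
    rw [RingHom.map_det, RingHom.mapMatrix_apply, hMmap, hdetR, map_zero]
  obtain ⟨y, hyne, hy⟩ := Matrix.exists_mulVec_eq_zero_iff.mpr hdetK
  set u : Fin s → ℝ := fun i => (y i : ℝ) with hudef
  have hu0 : (Aℝ - lam • (1 : Matrix (Fin s) (Fin s) ℝ)) *ᵥ u = 0 := by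
    funext i
    rw [← hMmap]
    have h1 := ((algebraMap K ℝ) : K →+* ℝ).map_mulVec M y i
    have h2 : ((algebraMap K ℝ) ∘ y) = u := by funext j; rfl
    rw [h2] at h1
    rw [← h1, hy]
    simp
  have hueig : Aℝ *ᵥ u = lam • u := by
    have h := hu0
    rw [Matrix.sub_mulVec, Matrix.smul_mulVec, Matrix.one_mulVec, sub_eq_zero] at h
    exact h
  obtain ⟨t, htu⟩ := perron_simple A lam x u hprim hxpos heig hueig
  have huK : ∀ i, u i ∈ K := fun i => (y i).2
  have htK : t ∈ K := by
    have ht : t = ∑ i, u i := by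
      calc t = t * ∑ i, x i := by rw [hsum, mul_one]
        _ = ∑ i, t * x i := by rw [Finset.mul_sum]
        _ = ∑ i, u i := by
            refine Finset.sum_congr rfl fun i _ => ?_
            rw [htu, Pi.smul_apply, smul_eq_mul]
    rw [ht]
    exact sum_mem fun i _ => huK i
  have htne : t ≠ 0 := by
    intro h
    apply hyne
    funext i
    have hui := congrFun htu i
    rw [h, Pi.smul_apply, smul_eq_mul, zero_mul] at hui
    exact Subtype.ext hui
  have hK : ∀ i, x i ∈ K := by
    intro i
    have hui : u i = t * x i := by
      rw [htu, Pi.smul_apply, smul_eq_mul]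
    have hxi : x i = t⁻¹ * u i := by
      rw [hui]
      field_simp
    rw [hxi]
    exact mul_mem (inv_mem htK) (huK i)
  refine ⟨hK, ?_⟩
  -- `lam` is algebraic over ℚ
  have hint : IsIntegral ℚ lam := by
    set Mq : Matrix (Fin s) (Fin s) ℚ := A.map (Nat.cast : ℕ → ℚ) with hMq
    have h1 : (Mq.charpoly).map (algebraMap ℚ ℝ) = Aℝ.charpoly := by
      rw [← Matrix.charpoly_map]
      have hmm : Mq.map (algebraMap ℚ ℝ) = Aℝ := by
        ext i j
        simp [hMq, hAR, Matrix.map_apply]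
      rw [hmm]
    refine ⟨Mq.charpoly, Mq.charpoly_monic, ?_⟩
    show Polynomial.eval₂ (algebraMap ℚ ℝ) lam Mq.charpoly = 0
    rw [Polynomial.eval₂_eq_eval_map, h1]
    have h2 := (Polynomial.evalRingHom lam).map_det (Matrix.charmatrix Aℝ)
    have h3 : ((Polynomial.evalRingHom lam).mapMatrix (Matrix.charmatrix Aℝ)) =
        lam • (1 : Matrix (Fin s) (Fin s) ℝ) - Aℝ := by
      rw [RingHom.mapMatrix_apply]
      ext i j
      rcases eq_or_ne i j with h | h
      · subst h
        simp [Matrix.charmatrix_apply_eq, Matrix.smul_apply, Matrix.one_apply_eq]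
      · simp [Matrix.charmatrix_apply_ne _ _ _ h, Matrix.smul_apply, Matrix.one_apply_ne h]
    have h4 : (lam • (1 : Matrix (Fin s) (Fin s) ℝ) - Aℝ).det = 0 := by
      refine Matrix.exists_mulVec_eq_zero_iff.mp ⟨x, hxne, ?_⟩
      rw [Matrix.sub_mulVec, Matrix.smul_mulVec, Matrix.one_mulVec, heig, sub_self]
    rw [Matrix.charpoly]
    calc Polynomial.eval lam (Matrix.charmatrix Aℝ).det
        = (Polynomial.evalRingHom lam) (Matrix.charmatrix Aℝ).det := rfl
      _ = ((Polynomial.evalRingHom lam).mapMatrix (Matrix.charmatrix Aℝ)).det := h2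
      _ = 0 := by rw [h3, h4]
  set W := Submodule.span ℚ (Set.range x) with hW
  have hWle : W ≤ Subalgebra.toSubmodule K.toSubalgebra := by
    rw [Submodule.span_le]
    rintro r ⟨i, rfl⟩
    exact hK i
  have hlxW : ∀ n i, lam ^ n * x i ∈ W := by
    intro n
    induction n with
    | zero =>
        intro i
        rw [pow_zero, one_mul]
        exact Submodule.subset_span ⟨i, rfl⟩
    | succ n ih =>
        intro i
        have hli : lam * x i = ∑ j, ((A i j : ℝ)) * x j := by
          have hh := congrFun heig i
          rw [Pi.smul_apply, smul_eq_mul] at hh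
          rw [← hh]
          simp [Matrix.mulVec, dotProduct, hAR, Matrix.map_apply]
        have hstep : lam ^ (n+1) * x i = ∑ j, ((A i j : ℚ)) • (lam ^ n * x j) := by
          rw [pow_succ]
          calc lam ^ n * lam * x i = lam ^ n * (lam * x i) := by ring
            _ = lam ^ n * ∑ j, ((A i j : ℝ)) * x j := by rw [hli]
            _ = ∑ j, ((A i j : ℚ)) • (lam ^ n * x j) := by
                rw [Finset.mul_sum]
                refine Finset.sum_congr rfl fun j _ => ?_
                rw [Rat.smul_def]
                push_cast
                ring
        rw [hstep]
        exact Submodule.sum_mem _ fun j _ => Submodule.smul_mem _ _ (ih j)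
  have hlW : ∀ n, lam ^ n ∈ W := by
    intro n
    have h : lam ^ n = ∑ i, lam ^ n * x i := by
      rw [← Finset.mul_sum, hsum, mul_one]
    rw [h]
    exact Submodule.sum_mem _ fun i _ => hlxW n i
  have hKle : Subalgebra.toSubmodule K.toSubalgebra ≤ W := by
    intro r hr
    have hr' : r ∈ K.toSubalgebra := hr
    rw [hKdef, IntermediateField.adjoin_simple_toSubalgebra_of_isAlgebraic hint.isAlgebraic,
      Algebra.adjoin_singleton_eq_range_aeval] at hr'
    obtain ⟨p, hp⟩ := hr'
    have hp' : Polynomial.aeval lam p = r := hp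
    rw [← hp', Polynomial.aeval_eq_sum_range]
    exact Submodule.sum_mem _ fun k _ => Submodule.smul_mem _ _ (hlW k)
  have hWeq : W = Subalgebra.toSubmodule K.toSubalgebra := le_antisymm hWle hKle
  rw [hWeq, Subalgebra.finrank_toSubmodule]
  exact IntermediateField.adjoin.finrank hint
end

section
/- Let A be a primitive s×s matrix with nonnegative integer entries whose Perron–Frobenius eigenvalue λ satisfies λ > 1, and let k = deg λ. If P is a primitive l×l matrix with nonnegative integer entries, with Perron–Frobenius eigenvalue β, such that S(P) = α·S(A) for some real α > 0, then deg β ≥ k. -/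
open Matrix

open Pointwise


open Polynomial IntermediateField

private lemma my_mulvec_pow {l : ℕ} (M : Matrix (Fin l) (Fin l) ℝ) (β : ℝ) (y : Fin l → ℝ)
    (h : M *ᵥ y = β • y) (n : ℕ) : (M ^ n) *ᵥ y = β ^ n • y := by
  induction n with
  | zero => simp [Matrix.one_mulVec]
  | succ n ih =>
    rw [pow_succ, pow_succ, ← Matrix.mulVec_mulVec, h, Matrix.mulVec_smul, ih, smul_smul,
      mul_comm]

private lemma my_pf_unique {l : ℕ} (P : Matrix (Fin l) (Fin l) ℕ) (β : ℝ) (y w : Fin l → ℝ)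
    (hne : Nonempty (Fin l))
    (hPprim : MatPrimitive P) (hy : ∀ i, 0 < y i)
    (hPy : (P.map (Nat.cast : ℕ → ℝ)) *ᵥ y = β • y)
    (hPw : (P.map (Nat.cast : ℕ → ℝ)) *ᵥ w = β • w) :
    ∃ c : ℝ, w = c • y := by
  obtain ⟨n, -, hpos⟩ := hPprim
  set M := P.map (Nat.cast : ℕ → ℝ) with hM
  have hMpow : M ^ n = (P ^ n).map (Nat.cast : ℕ → ℝ) := by
    have h1 : M = (Nat.castRingHom ℝ).mapMatrix P := rfl
    have h2 : (P ^ n).map (Nat.cast : ℕ → ℝ) = (Nat.castRingHom ℝ).mapMatrix (P ^ n) := rfl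
    rw [h1, h2, map_pow]
  have hMn_pos : ∀ i j, (0:ℝ) < (M ^ n) i j := by
    intro i j
    rw [hMpow]
    simpa [Matrix.map_apply] using (Nat.cast_pos (α := ℝ)).mpr (hpos i j)
  haveI := hne
  obtain ⟨i0, -, hmin⟩ := Finset.exists_min_image Finset.univ (fun i => w i / y i)
    Finset.univ_nonempty
  set c := w i0 / y i0 with hc
  set v := w - c • y with hv
  have hveig : (M ^ n) *ᵥ v = β ^ n • v := by
    rw [hv, Matrix.mulVec_sub, Matrix.mulVec_smul, my_mulvec_pow M β y hPy n,
      my_mulvec_pow M β w hPw n, smul_sub, smul_comm]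
  have hv_nonneg : ∀ i, 0 ≤ v i := by
    intro i
    have h1 : c ≤ w i / y i := hmin i (Finset.mem_univ i)
    have h2 : c * y i ≤ w i := (le_div_iff₀ (hy i)).mp h1
    simpa [hv, sub_nonneg] using h2
  have hvi0 : v i0 = 0 := by
    simp only [hv, Pi.sub_apply, Pi.smul_apply, smul_eq_mul, hc]
    rw [div_mul_cancel₀ _ (ne_of_gt (hy i0))]
    ring
  have hsum0 : ∑ j, (M ^ n) i0 j * v j = 0 := by
    have := congrFun hveig i0
    simp only [Matrix.mulVec, dotProduct, Pi.smul_apply, smul_eq_mul] at this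
    rw [this, hvi0, mul_zero]
  have hvz : ∀ j, v j = 0 := by
    intro j
    have hterm : ∀ i ∈ Finset.univ, 0 ≤ (M ^ n) i0 i * v i :=
      fun i _ => mul_nonneg (le_of_lt (hMn_pos i0 i)) (hv_nonneg i)
    have := (Finset.sum_eq_zero_iff_of_nonneg hterm).mp hsum0 j (Finset.mem_univ j)
    rcases mul_eq_zero.mp this with h | h
    · exact absurd h (ne_of_gt (hMn_pos i0 j))
    · exact h
  refine ⟨c, ?_⟩
  funext i
  have := hvz i
  simp only [hv, Pi.sub_apply, Pi.smul_apply, smul_eq_mul, sub_eq_zero] at this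
  simpa using this

private lemma my_MR_mulVec {l : ℕ} (P : Matrix (Fin l) (Fin l) ℕ) (β : ℝ) (v : Fin l → ℝ) :
    (Matrix.of fun i j => ((P i j : ℝ) - if i = j then β else 0)) *ᵥ v
      = (P.map (Nat.cast : ℕ → ℝ)) *ᵥ v - β • v := by
  funext i
  simp only [Matrix.mulVec, dotProduct, Matrix.of_apply, sub_mul, ite_mul, zero_mul,
    Finset.sum_sub_distrib, Pi.sub_apply, Pi.smul_apply, smul_eq_mul, Matrix.map_apply,
    Finset.sum_ite_eq, Finset.mem_univ, if_true]

private lemma my_isIntegral {l : ℕ} (P : Matrix (Fin l) (Fin l) ℕ) (β : ℝ) (y : Fin l → ℝ)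
    (hy : ∀ i, 0 < y i) (hl : Nonempty (Fin l))
    (hPy : (P.map (Nat.cast : ℕ → ℝ)) *ᵥ y = β • y) : IsIntegral ℚ β := by
  set MR : Matrix (Fin l) (Fin l) ℝ :=
    Matrix.of (fun i j => ((P i j : ℝ) - if i = j then β else 0)) with hMR
  have hMRy : MR *ᵥ y = 0 := by rw [hMR, my_MR_mulVec, hPy, sub_self]
  have hynz : y ≠ 0 := by
    obtain ⟨i⟩ := hl
    intro h
    exact absurd (congrFun h i) (ne_of_gt (hy i))
  have hdetR : MR.det = 0 := Matrix.exists_mulVec_eq_zero_iff.mp ⟨y, hynz, hMRy⟩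
  set Pq : Matrix (Fin l) (Fin l) ℚ := P.map (Nat.cast : ℕ → ℚ) with hPq
  have hmapq : Pq.map (algebraMap ℚ ℝ) = P.map (Nat.cast : ℕ → ℝ) := by
    ext i j; simp [hPq, Matrix.map_apply]
  refine ⟨Pq.charpoly, Pq.charpoly_monic, ?_⟩
  have : Polynomial.aeval β Pq.charpoly = 0 := by
    rw [Polynomial.aeval_def, ← Polynomial.eval_map, ← Matrix.charpoly_map, hmapq]
    rw [show ((P.map (Nat.cast : ℕ → ℝ)).charpoly).eval β
        = (Matrix.scalar (Fin l) β - P.map (Nat.cast : ℕ → ℝ)).det by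
      rw [Matrix.charpoly, eval_det, matPolyEquiv_charmatrix]; simp]
    have hneg : Matrix.scalar (Fin l) β - P.map (Nat.cast : ℕ → ℝ) = -MR := by
      ext i j
      simp only [hMR, Matrix.scalar_apply, Matrix.diagonal_apply, Matrix.sub_apply,
        Matrix.neg_apply, Matrix.of_apply, Matrix.map_apply]
      split <;> ring
    rw [hneg, Matrix.det_neg, hdetR, mul_zero]
  exact this

private lemma my_y_mem {l : ℕ} (P : Matrix (Fin l) (Fin l) ℕ) (β : ℝ) (y : Fin l → ℝ)
    (hPprim : MatPrimitive P)
    (hy : ∀ i, 0 < y i) (hl : Nonempty (Fin l)) (hysum : ∑ i, y i = 1)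
    (hPy : (P.map (Nat.cast : ℕ → ℝ)) *ᵥ y = β • y) :
    ∀ i, y i ∈ IntermediateField.adjoin ℚ ({β} : Set ℝ) := by
  set K := IntermediateField.adjoin ℚ ({β} : Set ℝ) with hK
  have hbK : β ∈ K := IntermediateField.mem_adjoin_simple_self ℚ β
  set b' : K := ⟨β, hbK⟩ with hb'
  set MR : Matrix (Fin l) (Fin l) ℝ :=
    Matrix.of (fun i j => ((P i j : ℝ) - if i = j then β else 0)) with hMR
  have hMRy : MR *ᵥ y = 0 := by rw [hMR, my_MR_mulVec, hPy, sub_self]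
  have hynz : y ≠ 0 := by
    obtain ⟨i⟩ := hl
    intro h
    exact absurd (congrFun h i) (ne_of_gt (hy i))
  have hdetR : MR.det = 0 := Matrix.exists_mulVec_eq_zero_iff.mp ⟨y, hynz, hMRy⟩
  set Mq : Matrix (Fin l) (Fin l) K :=
    Matrix.of (fun i j => ((P i j : K) - if i = j then b' else 0)) with hMq
  have hmap : Mq.map (algebraMap K ℝ) = MR := by
    ext i j
    simp only [hMq, hMR, Matrix.map_apply, Matrix.of_apply, map_sub, map_natCast, apply_ite,
      map_zero]
    split <;> simp [hb', IntermediateField.algebraMap_apply]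
  have hdetq : Mq.det = 0 := by
    have h1 : (algebraMap K ℝ) Mq.det = MR.det := by
      rw [← hmap, RingHom.map_det, RingHom.mapMatrix_apply]
    exact (algebraMap K ℝ).injective (by rw [h1, hdetR, map_zero])
  obtain ⟨w', hw'nz, hw'⟩ := Matrix.exists_mulVec_eq_zero_iff.mpr hdetq
  set w : Fin l → ℝ := fun i => (w' i : ℝ) with hw
  have hMRw : MR *ᵥ w = 0 := by
    funext i
    have : (MR *ᵥ w) i = algebraMap K ℝ ((Mq *ᵥ w') i) := by
      rw [← hmap]
      simp only [Matrix.mulVec, dotProduct, Matrix.map_apply, map_sum, _root_.map_mul, hw]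
      rfl
    rw [this, hw']
    simp
  have hPw : (P.map (Nat.cast : ℕ → ℝ)) *ᵥ w = β • w := by
    have := hMRw
    rw [hMR, my_MR_mulVec] at this
    exact sub_eq_zero.mp this
  obtain ⟨c, hc⟩ := my_pf_unique P β y w hl hPprim hy hPy hPw
  have hwnz : w ≠ 0 := by
    intro h
    apply hw'nz
    funext i
    have h2 := congrFun h i
    exact Subtype.ext (by simpa [hw] using h2)
  have hcnz : c ≠ 0 := by
    rintro rfl
    rw [zero_smul] at hc
    exact hwnz hc
  have hsw : ∑ i, w i = c := by
    rw [hc]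
    simp only [Pi.smul_apply, smul_eq_mul]
    rw [← Finset.mul_sum, hysum, mul_one]
  have hswK : ∑ i, w i = ((∑ i, w' i : K) : ℝ) := by
    rw [show ((∑ i, w' i : K) : ℝ) = algebraMap K ℝ (∑ i, w' i) from rfl, map_sum]
    rfl
  have hcK : c ∈ K := by
    rw [← hsw, hswK]
    exact SetLike.coe_mem _
  intro i
  have hyi : y i = c⁻¹ * w i := by
    have h3 := congrFun hc i
    simp only [Pi.smul_apply, smul_eq_mul] at h3
    rw [h3, ← mul_assoc, inv_mul_cancel₀ hcnz, one_mul]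
  rw [hyi]
  exact mul_mem (inv_mem hcK) (SetLike.coe_mem (w' i))


/-- if a primitive matrix `P` with Perron–Frobenius eigenvalue `β` satisfies
`S(P) = α · S(A)` for some `α > 0`, then `deg β ≥ deg λ`. -/
theorem degree_lower_bound_of_Sval_eq
    {s l k : ℕ} (A : Matrix (Fin s) (Fin s) ℕ) (lam : ℝ) (x : Fin s → ℝ)
    (hprim : MatPrimitive A) (hpf : PerronPair A lam x) (hsum : ∑ i, x i = 1)
    (hlam : 1 < lam) (hk : (minpoly ℚ lam).natDegree = k)
    (P : Matrix (Fin l) (Fin l) ℕ) (β : ℝ) (y : Fin l → ℝ)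
    (hPprim : MatPrimitive P) (hPpf : PerronPair P β y) (hysum : ∑ i, y i = 1)
    (α : ℝ) (hα : 0 < α) (hS : Sval β y = α • Sval lam x) :
    k ≤ (minpoly ℚ β).natDegree := by
  obtain ⟨hy, hPy⟩ := hPpf
  have hlne : l ≠ 0 := by
    rintro rfl
    simp at hysum
  have hl : Nonempty (Fin l) := ⟨⟨0, Nat.pos_of_ne_zero hlne⟩⟩
  have hbint : IsIntegral ℚ β := my_isIntegral P β y hy hl hPy
  set K := IntermediateField.adjoin ℚ ({β} : Set ℝ) with hK
  have hyK : ∀ i, y i ∈ K := my_y_mem P β y hPprim hy hl hysum hPy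
  have hbK : β ∈ K := IntermediateField.mem_adjoin_simple_self ℚ β
  have hHy : ∀ h ∈ AddSubgroup.closure (Set.range y), h ∈ K := by
    intro h hh
    have hle : AddSubgroup.closure (Set.range y) ≤ K.toSubfield.toSubring.toAddSubgroup :=
      AddSubgroup.closure_le _ |>.mpr (by rintro z ⟨i, rfl⟩; exact hyK i)
    exact hle hh
  have hSK : ∀ z ∈ Sval β y, z ∈ K := by
    rintro z ⟨N, h, hh, rfl⟩
    exact div_mem (hHy h hh) (pow_mem hbK N)
  have h1x : (1 : ℝ) ∈ Hgroup x := by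
    rw [← hsum]
    exact AddSubgroup.sum_mem _ fun i _ => AddSubgroup.subset_closure ⟨i, rfl⟩
  have hαn : ∀ N : ℕ, α * (1 / lam ^ N) ∈ K := by
    intro N
    apply hSK
    rw [hS]
    have hm : (1 / lam ^ N) ∈ Sval lam x := ⟨N, 1, h1x, rfl⟩
    have h2 := Set.smul_mem_smul_set (a := α) hm
    rwa [smul_eq_mul] at h2
  have hαK : α ∈ K := by simpa using hαn 0
  have ha1K : α * (1 / lam) ∈ K := by simpa using hαn 1
  have hlamne : lam ≠ 0 := by positivity
  have hαne : α ≠ 0 := ne_of_gt hα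
  have hlamK : lam ∈ K := by
    have hd := div_mem hαK ha1K
    have : α / (α * (1 / lam)) = lam := by field_simp
    rwa [this] at hd
  haveI : FiniteDimensional ℚ K := IntermediateField.adjoin.finiteDimensional hbint
  have hfr : Module.finrank ℚ K = (minpoly ℚ β).natDegree :=
    IntermediateField.adjoin.finrank hbint
  set lam' : K := ⟨lam, hlamK⟩ with hlam'
  have hlam2int : IsIntegral ℚ lam' := IsIntegral.of_finite ℚ lam'
  have hlamint : IsIntegral ℚ lam := by
    have := hlam2int.map (IsScalarTower.toAlgHom ℚ K ℝ)
    simpa using this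
  have hle2 : IntermediateField.adjoin ℚ ({lam} : Set ℝ) ≤ K := by
    rw [IntermediateField.adjoin_le_iff]
    exact Set.singleton_subset_iff.mpr hlamK
  have hfr2 : Module.finrank ℚ (IntermediateField.adjoin ℚ ({lam} : Set ℝ)) = k := by
    rw [IntermediateField.adjoin.finrank hlamint, hk]
  have hinj : Function.Injective ((IntermediateField.inclusion hle2).toLinearMap) :=
    (IntermediateField.inclusion hle2).toRingHom.injective
  have hfin := LinearMap.finrank_le_finrank_of_injective hinj
  rw [hfr2, hfr] at hfin
  exact hfin
end

section
/- Let x₁,…,x_s be positive rational numbers with Σᵢ xᵢ = 1, and let H(x) be the additive subgroup of ℝ generated by x₁,…,x_s. Then the set Y = ⋃_{l∈ℕ} { (y₁,…,y_l) : y_j ∈ ℚ ∩ (0,∞), Σ_{j=1}^l y_j = 1, and the additive subgroup of ℝ generated by y₁,…,y_l equals H(x) } is finite. -/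
open Matrix

/-- there are only finitely many tuples of positive rationals summing to `1`
that generate a given additive subgroup `H(x)` of `ℝ`. -/
theorem finitely_many_rational_tuples_generating_H
    {s : ℕ} (x : Fin s → ℚ) (hpos : ∀ i, 0 < x i) (hsum : ∑ i, x i = 1) :
    { y : List ℚ | (∀ q ∈ y, 0 < q) ∧ y.sum = 1 ∧
        AddSubgroup.closure { r : ℝ | ∃ q ∈ y, (q : ℝ) = r } =
          AddSubgroup.closure (Set.range fun i => ((x i : ℝ))) }.Finite := by
  classical
  set d : ℕ := ∏ i, (x i).den with hd_def
  have hd : 0 < d := Finset.prod_pos fun i _ => (x i).pos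
  have hdQ : (0:ℚ) < (d:ℚ) := by exact_mod_cast hd
  have hdR : (0:ℝ) < (d:ℝ) := by exact_mod_cast hd
  -- H is contained in (1/d)ℤ
  have hHsub : AddSubgroup.closure (Set.range fun i => ((x i : ℝ))) ≤
      AddSubgroup.zmultiples ((d:ℝ)⁻¹) := by
    rw [AddSubgroup.closure_le]
    rintro r ⟨i, rfl⟩
    have hdvd : (x i).den ∣ d := Finset.dvd_prod_of_mem _ (Finset.mem_univ i)
    obtain ⟨c, hc⟩ := hdvd
    refine ⟨(x i).num * c, ?_⟩
    have hden : ((x i).den : ℝ) ≠ 0 := by exact_mod_cast (x i).pos.ne'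
    have hx : ((x i : ℝ)) = ((x i).num : ℝ) / ((x i).den : ℝ) := by
      exact_mod_cast (Rat.num_div_den (x i)).symm
    have hc0 : c ≠ 0 := by rintro rfl; simp [hc] at hd
    have hcR : (c:ℝ) ≠ 0 := by exact_mod_cast hc0
    simp only [zsmul_eq_mul]
    rw [hx, hc]
    push_cast
    field_simp
  -- finite entry set
  set S : Set ℚ := (fun k : ℤ => (k : ℚ) / d) '' (Set.Icc 1 d) with hS_def
  have hSfin : S.Finite := (Set.finite_Icc (1:ℤ) d).image _
  -- the big set is contained in lists of length ≤ d with entries in S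
  have hsub : { y : List ℚ | (∀ q ∈ y, 0 < q) ∧ y.sum = 1 ∧
        AddSubgroup.closure { r : ℝ | ∃ q ∈ y, (q : ℝ) = r } =
          AddSubgroup.closure (Set.range fun i => ((x i : ℝ))) } ⊆
      { y : List ℚ | y.length ≤ d ∧ ∀ q ∈ y, q ∈ S } := by
    rintro y ⟨hypos, hysum, hyH⟩
    have key : ∀ q ∈ y, ∃ k : ℤ, 1 ≤ k ∧ k ≤ d ∧ q = (k:ℚ) / d := by
      intro q hq
      have hmem : (q:ℝ) ∈ AddSubgroup.closure { r : ℝ | ∃ q ∈ y, (q : ℝ) = r } :=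
        AddSubgroup.subset_closure ⟨q, hq, rfl⟩
      rw [hyH] at hmem
      obtain ⟨k, hk⟩ := hHsub hmem
      simp only [zsmul_eq_mul] at hk
      have hkq : (q:ℝ) = (k:ℝ) / d := by
        rw [← hk]; field_simp
      have hq1 : q ≤ 1 := by
        have := List.single_le_sum (l := y) (fun a ha => (hypos a ha).le) q hq
        rwa [hysum] at this
      have hk1 : 1 ≤ k := by
        have : (0:ℝ) < (k:ℝ) / d := by
          rw [← hkq]; exact_mod_cast hypos q hq
        rcases div_pos_iff.mp this with ⟨h1, _⟩ | ⟨_, h2⟩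
        · have : (0:ℤ) < k := by exact_mod_cast h1
          omega
        · linarith
      have hkd : k ≤ (d:ℤ) := by
        have : (k:ℝ) / d ≤ 1 := by rw [← hkq]; exact_mod_cast hq1
        have : (k:ℝ) ≤ d := by
          rw [div_le_one hdR] at this; exact this
        exact_mod_cast this
      refine ⟨k, hk1, hkd, ?_⟩
      have : ((q:ℝ)) = (((k:ℚ)/d : ℚ) : ℝ) := by push_cast; exact hkq
      exact_mod_cast this
    constructor
    · -- length bound
      have hlow : ∀ q ∈ y, (d:ℚ)⁻¹ ≤ q := by
        intro q hq
        obtain ⟨k, hk1, _, rfl⟩ := key q hq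
        rw [inv_eq_one_div, div_le_div_iff₀ hdQ hdQ]
        have : (1:ℚ) ≤ (k:ℚ) := by exact_mod_cast hk1
        nlinarith
      have := List.card_nsmul_le_sum y ((d:ℚ)⁻¹) hlow
      rw [hysum, nsmul_eq_mul] at this
      have hlen : (y.length : ℚ) ≤ d := by
        rw [← mul_le_mul_iff_of_pos_right (inv_pos.mpr hdQ)]
        calc (y.length:ℚ) * (d:ℚ)⁻¹ ≤ 1 := this
        _ = (d:ℚ) * (d:ℚ)⁻¹ := by field_simp
      exact_mod_cast hlen
    · intro q hq
      obtain ⟨k, hk1, hkd, rfl⟩ := key q hq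
      exact ⟨k, ⟨hk1, hkd⟩, rfl⟩
  refine Set.Finite.subset ?_ hsub
  -- lists of bounded length with entries in a finite set form a finite set
  haveI := hSfin.to_subtype
  have : { y : List ℚ | y.length ≤ d ∧ ∀ q ∈ y, q ∈ S } ⊆
      (List.map (Subtype.val : S → ℚ)) '' { l : List S | l.length ≤ d } := by
    rintro y ⟨hlen, hmem⟩
    refine ⟨y.attach.map (fun q => ⟨q.1, hmem q.1 q.2⟩), by simpa using hlen, ?_⟩
    simp [List.map_map]
  exact Set.Finite.subset ((List.finite_length_le S d).image _) this
end

section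
/- Let λ be the unique real root of the polynomial f(t) = t³ + 3t² − 15t − 46 (one has λ ≈ 3.8916, f is irreducible over ℚ, and λ is a Perron number of degree 3). Then there is no 3×3 matrix with nonnegative integer entries that has λ as an eigenvalue. -/
open Matrix

open Polynomial

lemma no_int_root (n : ℤ) : n ^ 3 + 3 * n ^ 2 - 15 * n - 46 ≠ 0 := by
  intro h
  have hd : n ∣ 46 := ⟨n ^ 2 + 3 * n - 15, by ring_nf; linarith⟩
  have h1 : n ≤ 46 := Int.le_of_dvd (by norm_num) hd
  have h2 : -46 ≤ n := by
    have := Int.le_of_dvd (show (0:ℤ) < 46 by norm_num) hd.neg_left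
    linarith
  interval_cases n <;> norm_num at h

noncomputable def fQ : ℚ[X] := X ^ 3 + C 3 * X ^ 2 - C 15 * X - C 46

lemma fQ_monic : fQ.Monic := by unfold fQ; monicity!

lemma fQ_natDegree : fQ.natDegree = 3 := by unfold fQ; compute_degree!

lemma fQ_irreducible : Irreducible fQ := by
  rw [fQ_monic.irreducible_iff_roots_eq_zero_of_degree_le_three (by rw [fQ_natDegree]; norm_num)
    (by rw [fQ_natDegree])]
  rw [Multiset.eq_zero_iff_forall_notMem]
  intro r hr
  rw [mem_roots fQ_monic.ne_zero, IsRoot, fQ] at hr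
  simp only [eval_add, eval_sub, eval_mul, eval_pow, eval_X, eval_C] at hr
  -- r is an algebraic integer, hence an integer
  have hint : IsIntegral ℤ r := by
    refine ⟨X ^ 3 + C 3 * X ^ 2 - C 15 * X - C 46, by monicity!, ?_⟩
    have haev : (Polynomial.aeval r) ((X : ℤ[X]) ^ 3 + C 3 * X ^ 2 - C 15 * X - C 46) = 0 := by
      simp only [_root_.map_add, _root_.map_sub, _root_.map_mul, map_pow, map_ofNat, aeval_X, aeval_C,
        algebraMap_int_eq, eq_intCast]
      push_cast
      linarith
    simpa [Polynomial.aeval_def] using haev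
  obtain ⟨m, hm⟩ := IsIntegrallyClosed.isIntegral_iff.mp hint
  rw [← hm] at hr
  simp only [algebraMap_int_eq, eq_intCast] at hr
  have : (m : ℚ) ^ 3 + 3 * m ^ 2 - 15 * m - 46 = ((m ^ 3 + 3 * m ^ 2 - 15 * m - 46 : ℤ) : ℚ) := by
    push_cast; ring
  rw [this] at hr
  exact no_int_root m (by exact_mod_cast hr)


/-- if `λ` is the Perron root of `t³ + 3t² - 15t - 46` (a Perron number,
`λ ≈ 3.8916`), then no `3 × 3` matrix with nonnegative integer entries has `λ` as an
eigenvalue. -/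
theorem no_3x3_nonneg_integer_matrix_with_eigenvalue
    (lam : ℝ) (hroot : lam ^ 3 + 3 * lam ^ 2 - 15 * lam - 46 = 0)
    (hperron : IsPerronNumber lam) :
    ¬ ∃ (B : Matrix (Fin 3) (Fin 3) ℕ) (v : Fin 3 → ℝ), v ≠ 0 ∧
      (B.map (Nat.cast : ℕ → ℝ)) *ᵥ v = lam • v := by
  rintro ⟨B, v, hv, hBv⟩
  set BZ : Matrix (Fin 3) (Fin 3) ℤ := B.map (Nat.cast : ℕ → ℤ) with hBZ
  set M : Matrix (Fin 3) (Fin 3) ℝ := B.map (Nat.cast : ℕ → ℝ) with hMdef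
  have hMZ : M = BZ.map (Int.cast : ℤ → ℝ) := by
    rw [hBZ, hMdef, Matrix.map_map]
    ext i j
    simp
  -- λ is a root of the real characteristic polynomial
  have hker : (Matrix.scalar (Fin 3) lam - M) *ᵥ v = 0 := by
    rw [Matrix.sub_mulVec, hBv]
    have : (Matrix.scalar (Fin 3) lam) *ᵥ v = lam • v := by
      ext i
      simp [Matrix.scalar, Matrix.mulVec_diagonal]
    rw [this, sub_self]
  have hdet : (Matrix.scalar (Fin 3) lam - M).det = 0 :=
    Matrix.exists_mulVec_eq_zero_iff.mp ⟨v, hv, hker⟩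
  have heval : Polynomial.eval lam M.charpoly = 0 := by
    rw [Matrix.charpoly, eval_det, Matrix.matPolyEquiv_charmatrix, eval_sub, eval_X,
      eval_C]
    exact hdet
  -- the rational characteristic polynomial
  set pQ : ℚ[X] := BZ.charpoly.map (Int.castRingHom ℚ) with hpQ
  have hpQmonic : pQ.Monic := (Matrix.charpoly_monic BZ).map _
  have hpQdeg : pQ.natDegree = 3 := by
    rw [hpQ, (Matrix.charpoly_monic BZ).natDegree_map, Matrix.charpoly_natDegree_eq_dim,
      Fintype.card_fin]
  have hpQroot : (Polynomial.aeval lam) pQ = 0 := by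
    rw [Polynomial.aeval_def, ← Polynomial.eval_map, hpQ, Polynomial.map_map]
    have : (algebraMap ℚ ℝ).comp (Int.castRingHom ℚ) = Int.castRingHom ℝ := by
      ext n; simp
    rw [this, ← Matrix.charpoly_map, Int.coe_castRingHom]
    exact hMZ ▸ heval
  -- minpoly ℚ lam = fQ
  have hfroot : (Polynomial.aeval lam) fQ = 0 := by
    rw [fQ]
    simp only [_root_.map_add, _root_.map_sub, _root_.map_mul, map_pow, map_ofNat, aeval_X,
      aeval_C, eq_ratCast, Rat.cast_ofNat]
    linarith
  have hmin : minpoly ℚ lam = fQ :=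
    (minpoly.eq_of_irreducible_of_monic fQ_irreducible hfroot fQ_monic).symm
  -- fQ divides pQ, same degree, both monic ⇒ equal
  have hdvd : fQ ∣ pQ := hmin ▸ minpoly.dvd ℚ lam hpQroot
  obtain ⟨c, hc⟩ := hdvd
  have hcmonic : c.Monic := by
    have := hpQmonic
    rw [hc] at this
    exact fQ_monic.of_mul_monic_left this
  have hcdeg : c.natDegree = 0 := by
    have := hpQdeg
    rw [hc, Polynomial.natDegree_mul fQ_monic.ne_zero hcmonic.ne_zero, fQ_natDegree] at this
    omega
  have hpQf : pQ = fQ := by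
    rw [hc, Polynomial.eq_one_of_monic_natDegree_zero hcmonic hcdeg, mul_one]
  -- coefficient 2 is 3, so the integer trace is -3
  have hcoeff : (BZ.charpoly.coeff 2 : ℚ) = 3 := by
    have h1 : pQ.coeff 2 = fQ.coeff 2 := by rw [hpQf]
    rw [hpQ, Polynomial.coeff_map] at h1
    have h2 : fQ.coeff 2 = 3 := by
      rw [fQ]
      simp [Polynomial.coeff_add, Polynomial.coeff_sub, Polynomial.coeff_X_pow,
        Polynomial.coeff_C_mul]
    simpa [h2] using h1
  have hcoeffZ : BZ.charpoly.coeff 2 = 3 := by exact_mod_cast hcoeff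
  have htrace : BZ.trace = -3 := by
    rw [Matrix.trace_eq_neg_charpoly_coeff, Fintype.card_fin]
    norm_num [hcoeffZ]
  have htrnn : 0 ≤ BZ.trace := by
    rw [Matrix.trace]
    apply Finset.sum_nonneg
    intro i _
    simp [hBZ, Matrix.diag]
  omega
end
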